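/- arXiv:0909.3288 — 2 statements merged into one kernel-verified Lean document; each statement's English description precedes it below -/
import Mathlib

section
/- Let ℱ be a complete fan of closed convex polyhedral cones in a finite-dimensional real vector space V. Let C₁ and C₂ be convex polyhedral cones, each of which is a union of faces of ℱ, with C₁ ⊆ C₂. If F₁ is a face of ℱ with F₁ ⊆ C₁ and dim F₁ = dim C₁, then there exists a face F₂ of ℱ with F₁ ⊆ F₂ ⊆ C₂ and dim F₂ = dim C₂. -/
open Set
open scoped Pointwise

noncomputable section

namespace ShardPaper

variable {V : Type*} [NormedAddCommGroup V] [InnerProductSpace ℝ V]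

/-- The dimension of a subset of `V`: the rank of its linear span. -/
def setDim (S : Set V) : ℕ :=
  Module.finrank ℝ (Submodule.span ℝ S)

/-- The codimension of a subset of `V`. -/
def setCodim (S : Set V) : ℕ :=
  Module.finrank ℝ V - setDim S

/-- A linear hyperplane in `V`: the zero set of a nonzero linear functional. -/
def IsHyperplane (H : Set V) : Prop :=
  ∃ f : V →ₗ[ℝ] ℝ, f ≠ 0 ∧ H = {x | f x = 0}

/-- A central hyperplane arrangement: a finite set of linear hyperplanes. -/
def IsCentralArrangement (A : Set (Set V)) : Prop :=
  A.Finite ∧ ∀ H ∈ A, IsHyperplane H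

/-- The complement of the union of the hyperplanes of the arrangement. -/
def arrComplement (A : Set (Set V)) : Set V :=
  (⋃₀ A)ᶜ

/-- A region of `A`: the closure of a connected component of the complement of `A`. -/
def IsRegion (A : Set (Set V)) (R : Set V) : Prop :=
  ∃ x ∈ arrComplement A, R = closure (connectedComponentIn (arrComplement A) x)

/-- The set `ℛ` of regions of `A`. -/
def Regions (A : Set (Set V)) : Set (Set V) :=
  {R | IsRegion A R}

/-- The hyperplane `H` separates `R` from `Q`: their interiors lie strictly on
opposite sides of `H`. -/
def Separates (H R Q : Set V) : Prop :=
  ∃ f : V →ₗ[ℝ] ℝ, H = {x | f x = 0} ∧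
    (∀ x ∈ interior R, f x < 0) ∧ (∀ y ∈ interior Q, 0 < f y)

/-- The separating set `S(R)` of a region `R` with respect to the base region `B`. -/
def Sep (A : Set (Set V)) (B R : Set V) : Set (Set V) :=
  {H | H ∈ A ∧ Separates H R B}

/-- The poset of regions: `Q ≤ R` iff `S(Q) ⊆ S(R)`. -/
def regLE (A : Set (Set V)) (B Q R : Set V) : Prop :=
  Q ∈ Regions A ∧ R ∈ Regions A ∧ Sep A B Q ⊆ Sep A B R

/-- Strict order in the poset of regions. -/
def regLT (A : Set (Set V)) (B Q R : Set V) : Prop :=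
  Q ∈ Regions A ∧ R ∈ Regions A ∧ Sep A B Q ⊂ Sep A B R

/-- The cover relation `Q ⋖ R` in the poset of regions. -/
def regCovBy (A : Set (Set V)) (B Q R : Set V) : Prop :=
  regLT A B Q R ∧ ∀ P, regLT A B Q P → regLT A B P R → False

/-- `S` is the join (least upper bound) of the set `X` in the poset of regions. -/
def IsRegJoin (A : Set (Set V)) (B : Set V) (X : Set (Set V)) (S : Set V) : Prop :=
  S ∈ Regions A ∧ (∀ Q ∈ X, regLE A B Q S) ∧
    ∀ P ∈ Regions A, (∀ Q ∈ X, regLE A B Q P) → regLE A B S P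

/-- `S` is the meet (greatest lower bound) of the set `X` in the poset of regions. -/
def IsRegMeet (A : Set (Set V)) (B : Set V) (X : Set (Set V)) (S : Set V) : Prop :=
  S ∈ Regions A ∧ (∀ Q ∈ X, regLE A B S Q) ∧
    ∀ P ∈ Regions A, (∀ Q ∈ X, regLE A B P Q) → regLE A B P S

/-- `X` is an antichain in the poset of regions. -/
def IsRegAntichain (A : Set (Set V)) (B : Set V) (X : Set (Set V)) : Prop :=
  ∀ x ∈ X, ∀ y ∈ X, x ≠ y → ¬ regLE A B x y

/-- The facet-defining hyperplanes of a region `R`. -/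
def FacetHyperplanes (A : Set (Set V)) (R : Set V) : Set (Set V) :=
  {H | H ∈ A ∧ setDim (R ∩ H) + 1 = Module.finrank ℝ V}

/-- A simplicial arrangement: for every region, the normal vectors of its
facet-defining hyperplanes are linearly independent. -/
def Simplicial (A : Set (Set V)) : Prop :=
  ∀ R ∈ Regions A, ∃ ν : FacetHyperplanes A R → V,
    (∀ H : FacetHyperplanes A R, ν H ≠ 0 ∧ ∀ x ∈ H.1, (inner ℝ (ν H) x : ℝ) = 0) ∧
      LinearIndependent ℝ ν

/-- A full subarrangement of `A`: all hyperplanes of `A` containing a given subset of `V`. -/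
def IsFullSub (A A' : Set (Set V)) : Prop :=
  ∃ S : Set V, A' = {H | H ∈ A ∧ S ⊆ H}

/-- `H` is a basic hyperplane of the arrangement `A₀` relative to the base region `B`:
a facet-defining hyperplane of the `A₀`-region containing `B`. -/
def IsBasic (A₀ : Set (Set V)) (B H : Set V) : Prop :=
  ∃ R' ∈ Regions A₀, B ⊆ R' ∧ H ∈ FacetHyperplanes A₀ R'

/-- The rank-two full subarrangement `A(H,H')` of all hyperplanes containing `H ∩ H'`. -/
def pairSub (A : Set (Set V)) (H H' : Set V) : Set (Set V) :=
  {H'' | H'' ∈ A ∧ H ∩ H' ⊆ H''}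

/-- The cutting relation: `H` cuts `H'`. -/
def Cuts (A : Set (Set V)) (B H H' : Set V) : Prop :=
  H ∈ A ∧ H' ∈ A ∧ H ≠ H' ∧
    IsBasic (pairSub A H H') B H ∧ ¬ IsBasic (pairSub A H H') B H'

/-- What remains of `H` after removing the points of hyperplanes cutting `H`. -/
def uncut (A : Set (Set V)) (B H : Set V) : Set V :=
  H \ ⋃₀ {H'' | Cuts A B H'' H}

/-- `Sg` is a shard contained in the hyperplane `H`: the closure of a connected
component of what remains of `H` after cutting. -/
def IsShardIn (A : Set (Set V)) (B H Sg : Set V) : Prop :=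
  H ∈ A ∧ ∃ x ∈ uncut A B H, Sg = closure (connectedComponentIn (uncut A B H) x)

/-- `Sg` is a shard of `(A, B)`. -/
def IsShard (A : Set (Set V)) (B Sg : Set V) : Prop :=
  ∃ H, IsShardIn A B H Sg

/-- `R` is an upper region of the shard `Sg`. -/
def IsUpperRegion (A : Set (Set V)) (B Sg R : Set V) : Prop :=
  R ∈ Regions A ∧ setDim (R ∩ Sg) = setDim Sg ∧
    ∃ H, IsShardIn A B H Sg ∧ H ∈ Sep A B R

/-- `Sg` is a lower shard of the region `R`. -/
def IsLowerShard (A : Set (Set V)) (B Sg R : Set V) : Prop :=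
  IsShard A B Sg ∧ IsUpperRegion A B Sg R

/-- `J = J(Sg)`: the minimal upper region of the shard `Sg`. -/
def IsJ (A : Set (Set V)) (B Sg J : Set V) : Prop :=
  IsUpperRegion A B Sg J ∧ ∀ R, IsUpperRegion A B Sg R → regLE A B J R

/-- The lower hyperplanes of `R`: hyperplanes containing a facet of `R`
separating `R` from a region covered by `R`. -/
def LowerHyps (A : Set (Set V)) (B R : Set V) : Set (Set V) :=
  {H | H ∈ A ∧ ∃ Q, regCovBy A B Q R ∧
    setDim (Q ∩ R) + 1 = Module.finrank ℝ V ∧ Q ∩ R ⊆ H}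

/-- The standard subarrangement `A_K`. -/
def stdSub (A : Set (Set V)) (K : Set (Set V)) : Set (Set V) :=
  {H | H ∈ A ∧ ⋂₀ K ⊆ H}

/-- `Ψ`: the set of all intersections of shards (with `V` as the empty intersection). -/
def ShardInts (A : Set (Set V)) (B : Set V) : Set (Set V) :=
  {Γ | ∃ 𝒮 : Set (Set V), (∀ Sg ∈ 𝒮, IsShard A B Sg) ∧ Γ = ⋂₀ 𝒮}

/-- The map `ψ`: the intersection of the lower shards of `R`. -/
def psiMap (A : Set (Set V)) (B R : Set V) : Set V :=
  ⋂₀ {Sg | IsLowerShard A B Sg R}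

/-- The shard intersection order: `Q ⪯ R` iff `ψ(Q) ⊇ ψ(R)`. -/
def shardLE (A : Set (Set V)) (B Q R : Set V) : Prop :=
  Q ∈ Regions A ∧ R ∈ Regions A ∧ psiMap A B R ⊆ psiMap A B Q

/-- Strict shard intersection order. -/
def shardLT (A : Set (Set V)) (B Q R : Set V) : Prop :=
  Q ∈ Regions A ∧ R ∈ Regions A ∧ psiMap A B R ⊂ psiMap A B Q

/-- The cover relation in the shard intersection order. -/
def shardCovBy (A : Set (Set V)) (B Q R : Set V) : Prop :=
  shardLT A B Q R ∧ ∀ P, shardLT A B Q P → shardLT A B P R → False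

/-- `S` is the join of `X` in the shard intersection order. -/
def IsShardJoin (A : Set (Set V)) (B : Set V) (X : Set (Set V)) (S : Set V) : Prop :=
  S ∈ Regions A ∧ (∀ Q ∈ X, shardLE A B Q S) ∧
    ∀ P ∈ Regions A, (∀ Q ∈ X, shardLE A B Q P) → shardLE A B S P

/-- `S` is the meet of `X` in the shard intersection order. -/
def IsShardMeet (A : Set (Set V)) (B : Set V) (X : Set (Set V)) (S : Set V) : Prop :=
  S ∈ Regions A ∧ (∀ Q ∈ X, shardLE A B S Q) ∧
    ∀ P ∈ Regions A, (∀ Q ∈ X, shardLE A B P Q) → shardLE A B P S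

/-- A face of a convex set: a nonempty extreme subset. -/
def IsFaceOf (C F : Set V) : Prop :=
  IsExtreme ℝ C F ∧ F.Nonempty

/-- A convex polyhedral cone: determined by a finite system of linear inequalities. -/
def IsPolyhedralCone (C : Set V) : Prop :=
  ∃ s : Finset (V →ₗ[ℝ] ℝ), C = {x | ∀ f ∈ s, f x ≤ 0}

/-- A fan: a finite collection of closed convex polyhedral cones, closed under
faces, in which any two cones intersect in a common face. -/
def IsFan (Fn : Set (Set V)) : Prop :=
  Fn.Finite ∧ (∀ C ∈ Fn, IsPolyhedralCone C) ∧
    (∀ C ∈ Fn, ∀ D, IsFaceOf C D → D ∈ Fn) ∧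
    ∀ C ∈ Fn, ∀ D ∈ Fn, IsFaceOf C (C ∩ D) ∧ IsFaceOf D (C ∩ D)

/-- A complete fan: the cones cover `V`. -/
def IsCompleteFan (Fn : Set (Set V)) : Prop :=
  IsFan Fn ∧ ⋃₀ Fn = univ

/-- The fan `ℱ(A)` of all regions of `A` together with their faces. -/
def arrFan (A : Set (Set V)) : Set (Set V) :=
  {F | ∃ R ∈ Regions A, IsFaceOf R F}

/-- A lattice congruence on the poset of regions: an equivalence relation on the
regions compatible with joins and meets. -/
def IsLatCong (A : Set (Set V)) (B : Set V) (Θ : Set V → Set V → Prop) : Prop :=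
  (∀ R ∈ Regions A, Θ R R) ∧
  (∀ Q R, Θ Q R → Q ∈ Regions A ∧ R ∈ Regions A) ∧
  (∀ Q R, Θ Q R → Θ R Q) ∧
  (∀ P Q R, Θ P Q → Θ Q R → Θ P R) ∧
  (∀ x₁ x₂ y₁ y₂ j₁ j₂, Θ x₁ x₂ → Θ y₁ y₂ →
    IsRegJoin A B {x₁, y₁} j₁ → IsRegJoin A B {x₂, y₂} j₂ → Θ j₁ j₂) ∧
  (∀ x₁ x₂ y₁ y₂ m₁ m₂, Θ x₁ x₂ → Θ y₁ y₂ →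
    IsRegMeet A B {x₁, y₁} m₁ → IsRegMeet A B {x₂, y₂} m₂ → Θ m₁ m₂)

/-- `R` is the bottom element of its `Θ`-class, i.e. `R ∈ π_↓^Θ(ℛ)`. -/
def IsBotOfClass (A : Set (Set V)) (B : Set V) (Θ : Set V → Set V → Prop) (R : Set V) : Prop :=
  R ∈ Regions A ∧ ∀ Q, Θ Q R → regLE A B R Q

/-- The depth of a hyperplane: the minimal size of the separating set of a region
separated from `B` by `H`. -/
def depth (A : Set (Set V)) (B H : Set V) : ℕ :=
  sInf {n | ∃ R ∈ Regions A, H ∈ Sep A B R ∧ (Sep A B R).ncard = n}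

/-- The canonical joinands of `R`: the regions `J(Σ)` for `Σ` a lower shard of `R`. -/
def canJoinands (A : Set (Set V)) (B R : Set V) : Set (Set V) :=
  {J | ∃ Sg, IsLowerShard A B Sg R ∧ IsJ A B Sg J}

/-- The set `{J(Σ) : Σ a shard with Σ ⊇ Γ}`. -/
def upJoinands (A : Set (Set V)) (B Γ : Set V) : Set (Set V) :=
  {J | ∃ Sg, IsShard A B Sg ∧ Γ ⊆ Sg ∧ IsJ A B Sg J}

/-- The set `I(Q₀, R₀) = {J(Σ(P ⋖ P')) : Q₀ ≤ P ⋖ P' ≤ R₀}`. -/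
def Iset (A : Set (Set V)) (B Q₀ R₀ : Set V) : Set (Set V) :=
  {J | ∃ P P' Sg, regLE A B Q₀ P ∧ regCovBy A B P P' ∧ regLE A B P' R₀ ∧
    IsShard A B Sg ∧ P ∩ P' ⊆ Sg ∧ IsJ A B Sg J}

end ShardPaper

open ShardPaper

lemma aux_pigeonhole {α : Type*} {G : Set α} (hG : G.Finite) (P : ℕ → α → Prop)
    (h : ∀ n, ∃ g ∈ G, P n g) : ∃ g ∈ G, {n | P n g}.Infinite := by
  by_contra hc
  push_neg at hc
  have hsub : (Set.univ : Set ℕ) ⊆ ⋃ g ∈ G, {n | P n g} := by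
    intro n _
    obtain ⟨g, hg, hp⟩ := h n
    exact Set.mem_biUnion hg hp
  exact Set.infinite_univ ((hG.biUnion hc).subset hsub)

lemma aux_cover {V : Type*} [AddCommGroup V] [Module ℝ V] :
    ∀ (n : ℕ) (T : Finset (Submodule ℝ V)) (C : Set V), T.card = n →
    Convex ℝ C → C.Nonempty → (∀ c ∈ C, ∃ W ∈ T, c ∈ W) →
    ∃ W ∈ T, C ⊆ (W : Set V) := by
  classical
  intro n
  induction n with
  | zero =>
    intro T C hcard _ hne hcov
    obtain ⟨c, hc⟩ := hne
    obtain ⟨W, hW, _⟩ := hcov c hc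
    simp [Finset.card_eq_zero.mp hcard] at hW
  | succ n ih =>
    intro T C hcard hconv hne hcov
    obtain ⟨W₀, hW₀⟩ := Finset.card_pos.mp (by omega : 0 < T.card)
    by_cases hsub : C ⊆ (W₀ : Set V)
    · exact ⟨W₀, hW₀, hsub⟩
    rw [Set.not_subset] at hsub
    obtain ⟨c, hcC, hc₀⟩ := hsub
    have hcov' : ∀ b ∈ C, ∃ W ∈ T.erase W₀, b ∈ W := by
      intro b hbC
      by_cases hbW : b ∈ W₀
      · set t : ℕ → ℝ := fun k => ((k : ℝ) + 2)⁻¹ with htdef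
        have htpos : ∀ k : ℕ, 0 < t k := fun k => by positivity
        have htle : ∀ k : ℕ, t k ≤ 1 := fun k => by
          rw [htdef]
          rw [inv_le_one_iff₀]
          right
          have : (0:ℝ) ≤ (k:ℝ) := Nat.cast_nonneg k
          linarith
        have htinj : ∀ k l : ℕ, k < l → t l < t k := by
          intro k l hkl
          have hkl' : (k:ℝ) < (l:ℝ) := Nat.cast_lt.mpr hkl
          rw [htdef]
          exact inv_strictAnti₀ (by positivity) (by linarith)
        have hmC : ∀ k : ℕ, b + t k • (c - b) ∈ C := by
          intro k
          have h' : (1 - t k) • b + t k • c ∈ C :=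
            hconv hbC hcC (by linarith [htpos k, htle k]) (le_of_lt (htpos k)) (by ring)
          have : b + t k • (c - b) = (1 - t k) • b + t k • c := by module
          rw [this]; exact h'
        have hP : ∀ k : ℕ, ∃ W ∈ ((T.erase W₀ : Finset _) : Set (Submodule ℝ V)),
            b + t k • (c - b) ∈ W := by
          intro k
          obtain ⟨W, hWT, hmem⟩ := hcov _ (hmC k)
          refine ⟨W, ?_, hmem⟩
          rw [Finset.mem_coe, Finset.mem_erase]
          refine ⟨?_, hWT⟩
          rintro rfl
          have h1 : t k • (c - b) ∈ W := by
            have := W.sub_mem hmem hbW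
            simpa using this
          have h2 : c - b ∈ W := by
            have := W.smul_mem (t k)⁻¹ h1
            rwa [smul_smul, inv_mul_cancel₀ (ne_of_gt (htpos k)), one_smul] at this
          exact hc₀ (by simpa using W.add_mem hbW h2)
        obtain ⟨W, hWmem, hWinf⟩ := aux_pigeonhole (T.erase W₀).finite_toSet _ hP
        rw [Finset.mem_coe] at hWmem
        obtain ⟨k₁, hk₁⟩ := hWinf.nonempty
        obtain ⟨k₂, hk₂, hklt⟩ := hWinf.exists_gt k₁
        have hm₁ : b + t k₁ • (c - b) ∈ W := hk₁
        have hm₂ : b + t k₂ • (c - b) ∈ W := hk₂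
        have hd : (t k₁ - t k₂) • (c - b) ∈ W := by
          have := W.sub_mem hm₁ hm₂
          have heq : (b + t k₁ • (c - b)) - (b + t k₂ • (c - b))
              = (t k₁ - t k₂) • (c - b) := by module
          rwa [heq] at this
        have hne' : t k₁ - t k₂ ≠ 0 := by
          have := htinj k₁ k₂ hklt
          linarith
        have hcb : c - b ∈ W := by
          have := W.smul_mem (t k₁ - t k₂)⁻¹ hd
          rwa [smul_smul, inv_mul_cancel₀ hne', one_smul] at this
        have hbW' : b ∈ W := by
          have := W.sub_mem hm₁ (W.smul_mem (t k₁) hcb)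
          simpa using this
        exact ⟨W, hWmem, hbW'⟩
      · obtain ⟨W, hWT, hmem⟩ := hcov b hbC
        refine ⟨W, Finset.mem_erase.mpr ⟨?_, hWT⟩, hmem⟩
        rintro rfl; exact hbW hmem
    obtain ⟨W, hWmem, hWsub⟩ := ih (T.erase W₀) C
      (by rw [Finset.card_erase_of_mem hW₀, hcard]; rfl) hconv hne hcov'
    exact ⟨W, Finset.mem_of_mem_erase hWmem, hWsub⟩
/-- Lemma (tech).  Let `ℱ` be a complete fan of closed convex polyhedral
cones.  Let `C₁ ⊆ C₂` be convex polyhedral cones, each a union of faces of `ℱ`.  If `F₁`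
is a face of `ℱ` contained in `C₁` with `dim F₁ = dim C₁`, then there is a face `F₂` of
`ℱ` with `F₁ ⊆ F₂ ⊆ C₂` and `dim F₂ = dim C₂`. -/
theorem statement_0 {V : Type*} [NormedAddCommGroup V] [InnerProductSpace ℝ V]
    [FiniteDimensional ℝ V]
    (Fn : Set (Set V)) (hFn : IsCompleteFan Fn)
    (C₁ C₂ : Set V) (hC₁ : IsPolyhedralCone C₁) (hC₂ : IsPolyhedralCone C₂)
    (hU₁ : ∃ G ⊆ Fn, C₁ = ⋃₀ G) (hU₂ : ∃ G ⊆ Fn, C₂ = ⋃₀ G)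
    (h12 : C₁ ⊆ C₂)
    (F₁ : Set V) (hF₁ : F₁ ∈ Fn) (hF₁C : F₁ ⊆ C₁) (hd₁ : setDim F₁ = setDim C₁) :
    ∃ F₂ ∈ Fn, F₁ ⊆ F₂ ∧ F₂ ⊆ C₂ ∧ setDim F₂ = setDim C₂ := by
  classical
  obtain ⟨⟨hfin, hpoly, _hfaces, hpair⟩, _hcomp⟩ := hFn
  obtain ⟨G, hG, hC₂eq⟩ := hU₂
  obtain ⟨s₁, hs₁⟩ := hpoly F₁ hF₁
  -- a "relative interior" point x of F₁
  set T : Finset (V →ₗ[ℝ] ℝ) := s₁.filter (fun f => ∃ y ∈ F₁, f y < 0) with hT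
  set w : (V →ₗ[ℝ] ℝ) → V := fun f => if h : ∃ y ∈ F₁, f y < 0 then h.choose else 0 with hw
  have hwmem : ∀ f ∈ T, w f ∈ F₁ ∧ f (w f) < 0 := by
    intro f hf
    rw [hT, Finset.mem_filter] at hf
    obtain ⟨-, hex⟩ := hf
    rw [hw]
    simp only [dif_pos hex]
    exact ⟨hex.choose_spec.1, hex.choose_spec.2⟩
  set x : V := ∑ f ∈ T, w f with hx
  have hxF₁ : x ∈ F₁ := by
    rw [hs₁]
    intro g hg
    rw [hx, map_sum]
    apply Finset.sum_nonpos
    intro f hf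
    have hm := (hwmem f hf).1
    rw [hs₁] at hm
    exact hm g hg
  have hTneg : ∀ f ∈ T, f x < 0 := by
    intro f hf
    rw [hx, map_sum, ← Finset.add_sum_erase _ _ hf]
    apply add_neg_of_neg_of_nonpos (hwmem f hf).2
    apply Finset.sum_nonpos
    intro g hg
    have hm := (hwmem g (Finset.mem_of_mem_erase hg)).1
    rw [hs₁] at hm
    exact hm f (by rw [hT] at hf; exact (Finset.mem_filter.mp hf).1)
  have hzero : ∀ f ∈ s₁, f ∉ T → ∀ y ∈ F₁, f y = 0 := by
    intro f hfs hfT y hy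
    have h1 : f y ≤ 0 := by
      rw [hs₁] at hy
      exact hy f hfs
    have h2 : ¬ (f y < 0) := fun hlt =>
      hfT (by rw [hT]; exact Finset.mem_filter.mpr ⟨hfs, ⟨y, hy, hlt⟩⟩)
    linarith
  -- the relative-interior property of x
  have hrel : ∀ y ∈ F₁, ∃ ε : ℝ, 0 < ε ∧ (1 + ε) • x - ε • y ∈ F₁ := by
    intro y hy
    have hev : ∀ f ∈ s₁, ∀ᶠ ε : ℝ in nhdsWithin 0 (Set.Ioi 0),
        f ((1 + ε) • x - ε • y) ≤ 0 := by
      intro f hf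
      by_cases hfT : f ∈ T
      · have hfx : f x < 0 := hTneg f hfT
        have hc : Continuous fun ε : ℝ => f ((1 + ε) • x - ε • y) := by
          simp only [map_sub, map_smul, smul_eq_mul]
          fun_prop
        have ht : Filter.Tendsto (fun ε : ℝ => f ((1 + ε) • x - ε • y))
            (nhdsWithin 0 (Set.Ioi 0)) (nhds (f x)) := by
          have h0 : f ((1 + (0:ℝ)) • x - (0:ℝ) • y) = f x := by
            norm_num
          have h1 := hc.tendsto 0
          rw [h0] at h1
          exact h1.mono_left nhdsWithin_le_nhds
        exact (ht.eventually_lt_const hfx).mono fun ε h => le_of_lt h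
      · have hx0 : f x = 0 := hzero f hf hfT x hxF₁
        have hy0 : f y = 0 := hzero f hf hfT y hy
        apply Filter.Eventually.of_forall
        intro ε
        simp [map_sub, map_smul, smul_eq_mul, hx0, hy0]
    have hev1 : ∀ᶠ ε : ℝ in nhdsWithin 0 (Set.Ioi 0),
        ∀ f ∈ s₁, f ((1 + ε) • x - ε • y) ≤ 0 := (Finset.eventually_all _).mpr hev
    have hev2 : ∀ᶠ ε : ℝ in nhdsWithin 0 (Set.Ioi 0), ε ∈ Set.Ioi (0:ℝ) :=
      self_mem_nhdsWithin
    obtain ⟨ε, hε1, hε2⟩ := (hev1.and hev2).exists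
    exact ⟨ε, hε2, by rw [hs₁]; exact hε1⟩
  -- convexity of C₂
  obtain ⟨s₂, hs₂⟩ := hC₂
  have hconvC₂ : Convex ℝ C₂ := by
    have heq : {v : V | ∀ f ∈ s₂, f v ≤ 0} = ⋂ f ∈ s₂, {v : V | f v ≤ 0} := by
      ext v; simp
    rw [hs₂, heq]
    exact convex_iInter₂ fun f _ => convex_halfSpace_le f.isLinear 0
  have hGfin : G.Finite := hfin.subset hG
  have hxC₂ : x ∈ C₂ := h12 (hF₁C hxF₁)
  -- every point of C₂ is in the span of some member of G containing x
  have hstep2 : ∀ z ∈ C₂, ∃ F ∈ G, x ∈ F ∧ z ∈ Submodule.span ℝ F := by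
    intro z hz
    set t : ℕ → ℝ := fun k => ((k : ℝ) + 1)⁻¹ with htdef
    have htpos : ∀ k : ℕ, 0 < t k := fun k => by positivity
    have htle : ∀ k : ℕ, t k ≤ 1 := fun k => by
      rw [htdef, inv_le_one_iff₀]
      right
      have : (0:ℝ) ≤ (k:ℝ) := Nat.cast_nonneg k
      linarith
    have hmC : ∀ k : ℕ, x + t k • (z - x) ∈ C₂ := by
      intro k
      have h' : (1 - t k) • x + t k • z ∈ C₂ :=
        hconvC₂ hxC₂ hz (by linarith [htpos k, htle k]) (le_of_lt (htpos k)) (by ring)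
      have heq : x + t k • (z - x) = (1 - t k) • x + t k • z := by module
      rw [heq]; exact h'
    have hP : ∀ k : ℕ, ∃ F ∈ G, x + t k • (z - x) ∈ F := by
      intro k
      have hm := hmC k
      rw [hC₂eq] at hm
      obtain ⟨F, hF, hmem⟩ := hm
      exact ⟨F, hF, hmem⟩
    obtain ⟨F, hFG, hSinf⟩ := aux_pigeonhole hGfin _ hP
    obtain ⟨sF, hsF⟩ := hpoly F (hG hFG)
    have hxF : x ∈ F := by
      rw [hsF]
      intro f hf
      by_contra hpos
      push_neg at hpos
      obtain ⟨N, hN⟩ := exists_nat_gt ((-(f (z - x))) / f x)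
      obtain ⟨k, hkS, hk⟩ := hSinf.exists_gt N
      have hmem : x + t k • (z - x) ∈ F := hkS
      rw [hsF] at hmem
      have h1 : f x + t k * f (z - x) ≤ 0 := by
        have := hmem f hf
        rwa [map_add, map_smul, smul_eq_mul] at this
      have hk1 : (0:ℝ) < (k:ℝ) + 1 := by positivity
      have h6 : ((k:ℝ) + 1) * (f x + t k * f (z - x)) ≤ 0 :=
        mul_nonpos_of_nonneg_of_nonpos hk1.le h1
      have h7 : ((k:ℝ) + 1) * t k = 1 := by
        rw [htdef]
        exact mul_inv_cancel₀ (ne_of_gt hk1)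
      have h8 : ((k:ℝ) + 1) * f x + f (z - x) ≤ 0 := by
        have hexp : ((k:ℝ) + 1) * (f x + t k * f (z - x))
            = ((k:ℝ) + 1) * f x + (((k:ℝ) + 1) * t k) * f (z - x) := by ring
        rw [hexp, h7, one_mul] at h6
        exact h6
      have h9 : (-(f (z - x))) / f x < (k:ℝ) + 1 := by
        have hNk : (N:ℝ) < (k:ℝ) := Nat.cast_lt.mpr hk
        linarith
      have h10 : -(f (z - x)) < ((k:ℝ) + 1) * f x := (div_lt_iff₀ hpos).mp h9
      linarith
    obtain ⟨k₀, hk₀⟩ := hSinf.nonempty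
    have hy₀ : x + t k₀ • (z - x) ∈ Submodule.span ℝ F := Submodule.subset_span hk₀
    have hx' : x ∈ Submodule.span ℝ F := Submodule.subset_span hxF
    have hzx : t k₀ • (z - x) ∈ Submodule.span ℝ F := by
      have := Submodule.sub_mem _ hy₀ hx'
      simpa using this
    have hzx2 : z - x ∈ Submodule.span ℝ F := by
      have := Submodule.smul_mem _ (t k₀)⁻¹ hzx
      rwa [smul_smul, inv_mul_cancel₀ (ne_of_gt (htpos k₀)), one_smul] at this
    refine ⟨F, hFG, hxF, ?_⟩
    have := Submodule.add_mem _ hx' hzx2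
    simpa using this
  -- cover C₂ by the finitely many spans, find the big one
  set TT : Finset (Submodule ℝ V) :=
    (hGfin.toFinset.filter (fun F => x ∈ F)).image (fun F => Submodule.span ℝ F) with hTT
  have hcov : ∀ c ∈ C₂, ∃ W ∈ TT, c ∈ W := by
    intro c hc
    obtain ⟨F, hFG, hxF, hcs⟩ := hstep2 c hc
    refine ⟨Submodule.span ℝ F, ?_, hcs⟩
    rw [hTT]
    exact Finset.mem_image.mpr
      ⟨F, Finset.mem_filter.mpr ⟨hGfin.mem_toFinset.mpr hFG, hxF⟩, rfl⟩
  obtain ⟨W, hWTT, hC₂W⟩ := aux_cover TT.card TT C₂ rfl hconvC₂ ⟨x, hxC₂⟩ hcov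
  rw [hTT] at hWTT
  obtain ⟨F₂, hF₂mem, hWeq⟩ := Finset.mem_image.mp hWTT
  rw [Finset.mem_filter, hGfin.mem_toFinset] at hF₂mem
  obtain ⟨hF₂G, hxF₂⟩ := hF₂mem
  have hF₂Fn : F₂ ∈ Fn := hG hF₂G
  have hF₂sub : F₂ ⊆ C₂ := by
    rw [hC₂eq]
    exact fun v hv => ⟨F₂, hF₂G, hv⟩
  refine ⟨F₂, hF₂Fn, ?_, hF₂sub, ?_⟩
  · -- F₁ ⊆ F₂ via extremeness
    have hface : IsExtreme ℝ F₁ (F₁ ∩ F₂) := (hpair F₁ hF₁ F₂ hF₂Fn).1.1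
    have hxE : x ∈ F₁ ∩ F₂ := ⟨hxF₁, hxF₂⟩
    intro y hy
    obtain ⟨ε, hε, hzF₁⟩ := hrel y hy
    have h1ε : (0:ℝ) < 1 + ε := by linarith
    have hseg : x ∈ openSegment ℝ y ((1 + ε) • x - ε • y) := by
      refine ⟨ε / (1 + ε), 1 / (1 + ε), by positivity, by positivity, ?_, ?_⟩
      · field_simp
        ring
      · match_scalars <;> field_simp <;> ring_nf
    exact ((hface.2 hy hzF₁ hxE hseg) : y ∈ F₁ ∩ F₂).2
  · -- equal dimensions
    have hle1 : Submodule.span ℝ F₂ ≤ Submodule.span ℝ C₂ := Submodule.span_mono hF₂sub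
    have hle2 : Submodule.span ℝ C₂ ≤ Submodule.span ℝ F₂ := by
      apply Submodule.span_le.mpr
      rw [hWeq]
      exact hC₂W
    have hspaneq : Submodule.span ℝ F₂ = Submodule.span ℝ C₂ := le_antisymm hle1 hle2
    simp only [setDim]
    rw [hspaneq]
end
end

section
/- Let Σ be a lower shard of a region R ∈ ℛ (i.e., R is an upper region of Σ). Then J(Σ) is the unique minimal element in (ℛ,≤) among regions Q with Q ≤ R and H(Σ) ∈ S(Q). -/
open Set
open scoped Pointwise

noncomputable section

open ShardPaper

set_option linter.unusedSectionVars false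

namespace ShardLemmas

variable {V : Type*} [NormedAddCommGroup V] [InnerProductSpace ℝ V] [FiniteDimensional ℝ V]

/-- convex combination of positives is positive -/
lemma combo_pos {a b p q : ℝ} (ha : 0 ≤ a) (hb : 0 ≤ b) (hab : a + b = 1)
    (hp : 0 < p) (hq : 0 < q) : 0 < a * p + b * q := by
  rcases eq_or_lt_of_le ha with h | h
  · have hb1 : b = 1 := by linarith
    simp [← h, hb1, hq]
  · have : 0 ≤ b * q := mul_nonneg hb hq.le
    nlinarith

/-- kernel inclusion gives proportionality -/
lemma exists_smul_of_ker_subset {f g : V →ₗ[ℝ] ℝ} (hf : f ≠ 0)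
    (h : ∀ x, f x = 0 → g x = 0) : ∃ c : ℝ, g = c • f := by
  obtain ⟨v, hv⟩ : ∃ v, f v ≠ 0 := by
    by_contra hc
    push_neg at hc
    exact hf (LinearMap.ext fun x => by simp [hc x])
  refine ⟨g v / f v, LinearMap.ext fun x => ?_⟩
  have hker : f (x - (f x / f v) • v) = 0 := by
    simp [map_sub, map_smul, div_mul_cancel₀ _ hv]
  have := h _ hker
  simp only [map_sub, map_smul, smul_eq_mul, sub_eq_zero] at this
  simp only [LinearMap.smul_apply, smul_eq_mul]
  rw [this]
  field_simp

/-- hyperplane sets: inclusion implies equality -/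
lemma hyperplane_eq_of_subset {f g : V →ₗ[ℝ] ℝ} (hf : f ≠ 0) (hg : g ≠ 0)
    (h : {x : V | f x = 0} ⊆ {x : V | g x = 0}) : {x : V | f x = 0} = {x : V | g x = 0} := by
  obtain ⟨c, rfl⟩ := exists_smul_of_ker_subset hf (fun x hx => h hx)
  have hc : c ≠ 0 := by rintro rfl; simp at hg
  ext x
  simp only [mem_setOf_eq, LinearMap.smul_apply, smul_eq_mul]
  constructor
  · intro hx; simp [hx]
  · intro hx
    rcases mul_eq_zero.mp hx with h | h
    · exact absurd h hc
    · exact h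

lemma finrank_ker_add_one {f : V →ₗ[ℝ] ℝ} (hf : f ≠ 0) :
    Module.finrank ℝ (LinearMap.ker f) + 1 = Module.finrank ℝ V := by
  obtain ⟨v, hv⟩ : ∃ v, f v ≠ 0 := by
    by_contra hc
    push_neg at hc
    exact hf (LinearMap.ext fun x => by simp [hc x])
  have hsurj : Function.Surjective f := by
    intro r
    exact ⟨(r / f v) • v, by simp [map_smul, div_mul_cancel₀ _ hv]⟩
  have hrange : LinearMap.range f = ⊤ := LinearMap.range_eq_top.mpr hsurj
  have h1 : Module.finrank ℝ (LinearMap.range f) = 1 := by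
    rw [hrange, finrank_top, Module.finrank_self]
  have := LinearMap.finrank_range_add_finrank_ker f
  omega

/-- span of a relative ball in a kernel equals the kernel -/
lemma span_eq_ker_of_ball {f : V →ₗ[ℝ] ℝ} {x₀ : V} {ε : ℝ} (hε : 0 < ε) (hx₀ : f x₀ = 0)
    {S : Set V} (hball : ∀ y, f y = 0 → ‖y - x₀‖ < ε → y ∈ S) (hsub : ∀ y ∈ S, f y = 0) :
    Submodule.span ℝ S = LinearMap.ker f := by
  apply le_antisymm
  · rw [Submodule.span_le]
    intro y hy
    exact LinearMap.mem_ker.mpr (hsub y hy)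
  · intro h hh
    have hfh : f h = 0 := LinearMap.mem_ker.mp hh
    set δ : ℝ := ε / (2 * (‖h‖ + 1)) with hδdef
    have hpos : 0 < ‖h‖ + 1 := by positivity
    have hδ : 0 < δ := by positivity
    have h1 : x₀ + δ • h ∈ S := by
      apply hball
      · simp [map_add, map_smul, hx₀, hfh]
      · have : ‖x₀ + δ • h - x₀‖ = δ * ‖h‖ := by
          simp [norm_smul, abs_of_pos hδ]
        rw [this]
        calc δ * ‖h‖ ≤ δ * (‖h‖ + 1) := by nlinarith
        _ = ε / 2 := by rw [hδdef]; field_simp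
        _ < ε := by linarith
    have h0 : x₀ ∈ S := hball x₀ hx₀ (by simpa using hε)
    have hmem1 : (x₀ + δ • h) ∈ Submodule.span ℝ S := Submodule.subset_span h1
    have hmem0 : x₀ ∈ Submodule.span ℝ S := Submodule.subset_span h0
    have : δ • h ∈ Submodule.span ℝ S := by
      have := Submodule.sub_mem _ hmem1 hmem0
      simpa using this
    have := Submodule.smul_mem _ δ⁻¹ this
    rwa [smul_smul, inv_mul_cancel₀ (ne_of_gt hδ), one_smul] at this

/-- a nonempty open set has a point avoiding finitely many hyperplanes -/
lemma exists_generic {U : Set V} (hU : IsOpen U) (hne : U.Nonempty)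
    {T : Set (V →ₗ[ℝ] ℝ)} (hT : T.Finite) (hT0 : ∀ g ∈ T, g ≠ 0) :
    ∃ q ∈ U, ∀ g ∈ T, g q ≠ 0 := by
  classical
  have key : ∀ (T' : Finset (V →ₗ[ℝ] ℝ)), (∀ g ∈ T', g ≠ 0) →
      ∀ (U' : Set V), IsOpen U' → U'.Nonempty → ∃ q ∈ U', ∀ g ∈ T', g q ≠ 0 := by
    intro T'
    induction T' using Finset.induction_on with
    | empty => intro _ U' _ hne'; obtain ⟨q, hq⟩ := hne'; exact ⟨q, hq, by simp⟩
    | @insert g T'' hgT'' ih =>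
      intro h0 U' hU' hne'
      have hg0 : g ≠ 0 := h0 g (Finset.mem_insert_self g T'')
      have hker : IsClosed {x : V | g x = 0} := by
        have : Continuous g := g.continuous_of_finiteDimensional
        exact isClosed_eq this continuous_const
      set U₁ : Set V := U' ∩ {x : V | g x ≠ 0} with hU₁def
      have hU₁open : IsOpen U₁ := hU'.inter hker.isOpen_compl
      have hU₁ne : U₁.Nonempty := by
        by_contra hc
        push_neg at hc
        have hsub : U' ⊆ {x : V | g x = 0} := by
          intro u hu
          by_contra hgu
          exact (Set.eq_empty_iff_forall_notMem.mp hc u) ⟨hu, hgu⟩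
        obtain ⟨u, hu⟩ := hne'
        obtain ⟨ε, hε, hball⟩ := Metric.isOpen_iff.mp hU' u hu
        obtain ⟨v, hv⟩ : ∃ v, g v ≠ 0 := by
          by_contra hcc
          push_neg at hcc
          exact hg0 (LinearMap.ext fun x => by simp [hcc x])
        set δ : ℝ := ε / (2 * (‖v‖ + 1)) with hδdef
        have hδ : 0 < δ := by positivity
        have hmem : u + δ • v ∈ U' := by
          apply hball
          rw [Metric.mem_ball, dist_eq_norm]
          have hnv : ‖u + δ • v - u‖ = δ * ‖v‖ := by simp [norm_smul, abs_of_pos hδ]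
          rw [hnv]
          have h1 : δ * ‖v‖ ≤ δ * (‖v‖ + 1) := by nlinarith
          have h2 : δ * (‖v‖ + 1) = ε / 2 := by rw [hδdef]; field_simp
          linarith
        have h1 : g (u + δ • v) = 0 := hsub hmem
        have h2 : g u = 0 := hsub hu
        rw [map_add, map_smul, h2, zero_add, smul_eq_mul] at h1
        rcases mul_eq_zero.mp h1 with h | h
        · exact absurd h (ne_of_gt hδ)
        · exact hv h
      obtain ⟨q, hqU₁, hq⟩ := ih (fun g' hg' => h0 g' (Finset.mem_insert_of_mem hg')) U₁ hU₁open hU₁ne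
      refine ⟨q, hqU₁.1, ?_⟩
      intro g' hg'
      rcases Finset.mem_insert.mp hg' with rfl | hg''
      · exact hqU₁.2
      · exact hq g' hg''
  obtain ⟨q, hq1, hq2⟩ := key hT.toFinset (fun g hg => hT0 g (hT.mem_toFinset.mp hg)) U hU hne
  exact ⟨q, hq1, fun g hg => hq2 g (hT.mem_toFinset.mpr hg)⟩

lemma pos_of_mul_pos_pos {x y : ℝ} (h : 0 < x * y) (hy : 0 < y) : 0 < x := by
  rcases mul_pos_iff.mp h with ⟨h1, _⟩ | ⟨_, h2⟩
  · exact h1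
  · linarith

lemma neg_of_mul_pos_neg {x y : ℝ} (h : 0 < x * y) (hy : y < 0) : x < 0 := by
  rcases mul_pos_iff.mp h with ⟨_, h2⟩ | ⟨h1, _⟩
  · linarith
  · exact h1

lemma mul_neg_of_pos_of_neg' {a u v : ℝ} (h1 : 0 < a * u) (h2 : a * v < 0) : u * v < 0 := by
  rcases mul_pos_iff.mp h1 with ⟨ha, hu⟩ | ⟨ha, hu⟩
  · have hv : v < 0 := by nlinarith
    exact mul_neg_of_pos_of_neg hu hv
  · have hv : 0 < v := by nlinarith
    exact mul_neg_of_neg_of_pos hu hv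

lemma sign_flip {a b : ℝ} (h : 0 < a * b) : a < 0 ↔ b < 0 := by
  rcases mul_pos_iff.mp h with ⟨ha, hb⟩ | ⟨ha, hb⟩
  · constructor <;> intro <;> linarith
  · constructor <;> intro <;> linarith

section Cells

open ShardPaper

variable (A : Set (Set V)) (F : Set V → (V →ₗ[ℝ] ℝ))

/-- The open cell (chamber) of the point `x`. -/
def cellpt (x : V) : Set V := {y | ∀ K ∈ A, 0 < F K x * F K y}

variable {A F}

lemma cell_convex (x : V) : Convex ℝ (cellpt A F x) := by
  intro y hy z hz a b ha hb hab
  intro K hK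
  have h1 := hy K hK
  have h2 := hz K hK
  have : F K x * F K (a • y + b • z) = a * (F K x * F K y) + b * (F K x * F K z) := by
    simp [map_add, map_smul]
    ring
  rw [this]
  exact combo_pos ha hb hab h1 h2

lemma cell_isOpen (hAfin : A.Finite) (x : V) : IsOpen (cellpt A F x) := by
  have : cellpt A F x = ⋂ K ∈ A, {y | 0 < F K x * F K y} := by
    ext y; simp [cellpt, Set.mem_iInter]
  rw [this]
  apply hAfin.isOpen_biInter
  intro K _
  exact isOpen_lt continuous_const (continuous_const.mul (F K).continuous_of_finiteDimensional)

lemma mem_arrComplement_iff (hFk : ∀ K ∈ A, K = {x : V | F K x = 0}) (x : V) :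
    x ∈ arrComplement A ↔ ∀ K ∈ A, F K x ≠ 0 := by
  constructor
  · intro h K hK hx0
    exact h (Set.mem_sUnion.mpr ⟨K, hK, by rw [hFk K hK]; exact hx0⟩)
  · intro h hx
    obtain ⟨K, hK, hxk⟩ := Set.mem_sUnion.mp hx
    rw [hFk K hK] at hxk
    exact h K hK hxk

lemma mem_iff_zero (hFk : ∀ K ∈ A, K = {x : V | F K x = 0}) {K : Set V} (hK : K ∈ A)
    {x : V} : x ∈ K ↔ F K x = 0 := by
  conv_lhs => rw [hFk K hK]
  rfl

lemma cell_subset_compl (hFk : ∀ K ∈ A, K = {x : V | F K x = 0}) (x : V) :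
    cellpt A F x ⊆ arrComplement A := by
  intro y hy
  rw [mem_arrComplement_iff hFk]
  intro K hK h0
  have := hy K hK
  rw [h0, mul_zero] at this
  exact lt_irrefl 0 this

lemma self_mem_cell {x : V} (hx : ∀ K ∈ A, F K x ≠ 0) : x ∈ cellpt A F x := by
  intro K hK
  rcases (hx K hK).lt_or_gt with h | h
  · exact mul_pos_of_neg_of_neg h h
  · exact mul_pos h h

lemma comp_eq_cell (hFk : ∀ K ∈ A, K = {x : V | F K x = 0}) {x : V}
    (hx : x ∈ arrComplement A) :
    connectedComponentIn (arrComplement A) x = cellpt A F x := by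
  have hx' : ∀ K ∈ A, F K x ≠ 0 := (mem_arrComplement_iff hFk x).mp hx
  apply Set.Subset.antisymm
  · intro y hy K hK
    have ht : IsPreconnected (connectedComponentIn (arrComplement A) x) :=
      isPreconnected_connectedComponentIn
    have hsub : connectedComponentIn (arrComplement A) x ⊆ arrComplement A :=
      connectedComponentIn_subset _ _
    have hcover : connectedComponentIn (arrComplement A) x ⊆
        {v : V | 0 < F K v} ∪ {v : V | F K v < 0} := by
      intro v hv
      rcases ((mem_arrComplement_iff hFk v).mp (hsub hv) K hK).lt_or_gt with h | h
      · exact Or.inr h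
      · exact Or.inl h
    have hdisj : Disjoint {v : V | 0 < F K v} {v : V | F K v < 0} := by
      rw [Set.disjoint_left]
      intro a ha ha'
      simp only [Set.mem_setOf_eq] at ha ha'
      linarith
    have hopen1 : IsOpen {v : V | 0 < F K v} :=
      isOpen_lt continuous_const (F K).continuous_of_finiteDimensional
    have hopen2 : IsOpen {v : V | F K v < 0} :=
      isOpen_lt (F K).continuous_of_finiteDimensional continuous_const
    have hxmem : x ∈ connectedComponentIn (arrComplement A) x := mem_connectedComponentIn hx
    rcases ht.subset_or_subset hopen1 hopen2 hdisj hcover with h | h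
    · exact mul_pos (h hxmem) (h hy)
    · exact mul_pos_of_neg_of_neg (h hxmem) (h hy)
  · exact (cell_convex x).isPreconnected.subset_connectedComponentIn
      (self_mem_cell hx') (cell_subset_compl hFk x)

lemma closure_cell_sign {x : V} {K : Set V} (hK : K ∈ A) {y : V}
    (hy : y ∈ closure (cellpt A F x)) : 0 ≤ F K x * F K y := by
  have hsub : cellpt A F x ⊆ {v : V | 0 ≤ F K x * F K v} :=
    fun v hv => le_of_lt (hv K hK)
  have hcl : IsClosed {v : V | 0 ≤ F K x * F K v} :=
    isClosed_le continuous_const (continuous_const.mul (F K).continuous_of_finiteDimensional)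
  exact closure_minimal hsub hcl hy

lemma mem_region_sign {x : V} {K : Set V} (hK : K ∈ A) (hx : ∀ K ∈ A, F K x ≠ 0) {y : V}
    (hy : y ∈ closure (cellpt A F x)) (hy0 : F K y ≠ 0) : 0 < F K x * F K y :=
  lt_of_le_of_ne (closure_cell_sign hK hy)
    (by symm; exact mul_ne_zero (hx K hK) hy0)

lemma interior_closure_cell (hAfin : A.Finite) (hFne : ∀ K ∈ A, F K ≠ 0) {x : V}
    (hx : ∀ K ∈ A, F K x ≠ 0) :
    interior (closure (cellpt A F x)) = cellpt A F x := by
  apply Set.Subset.antisymm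
  · intro z hz K hK
    have hzc : z ∈ closure (cellpt A F x) := interior_subset hz
    have hge : 0 ≤ F K x * F K z := closure_cell_sign hK hzc
    rcases lt_or_eq_of_le hge with h | h
    · exact h
    exfalso
    have hz0 : F K z = 0 := by
      rcases mul_eq_zero.mp h.symm with h' | h'
      · exact absurd h' (hx K hK)
      · exact h'
    obtain ⟨ρ, hρ, hball⟩ := Metric.isOpen_iff.mp isOpen_interior z hz
    obtain ⟨u₀, hu₀⟩ : ∃ u₀, F K u₀ ≠ 0 := by
      by_contra hc; push_neg at hc
      exact (hFne K hK) (LinearMap.ext fun v => by simp [hc v])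
    set u : V := (F K x / F K u₀) • u₀ with hudef
    have hu : F K u = F K x := by
      rw [hudef, map_smul, smul_eq_mul, div_mul_cancel₀ _ hu₀]
    set δ : ℝ := ρ / (2 * (‖u‖ + 1)) with hδdef
    have hδ : 0 < δ := by positivity
    have hwball : z - δ • u ∈ Metric.ball z ρ := by
      rw [Metric.mem_ball, dist_eq_norm]
      have hn : ‖z - δ • u - z‖ = δ * ‖u‖ := by
        simp [norm_smul, abs_of_pos hδ]
      rw [hn]
      have h1 : δ * ‖u‖ ≤ δ * (‖u‖ + 1) := by nlinarith
      have h2 : δ * (‖u‖ + 1) = ρ / 2 := by rw [hδdef]; field_simp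
      linarith
    have hw : z - δ • u ∈ closure (cellpt A F x) := interior_subset (hball hwball)
    have hsign := closure_cell_sign (A := A) (F := F) hK hw
    have hcomp : F K x * F K (z - δ • u) = -(δ * (F K x * F K x)) := by
      rw [map_sub, map_smul, hz0, smul_eq_mul, hu]
      ring
    rw [hcomp] at hsign
    have hsq : 0 < F K x * F K x := mul_self_pos.mpr (hx K hK)
    nlinarith
  · exact interior_maximal subset_closure (cell_isOpen hAfin x)

lemma region_repr (hFk : ∀ K ∈ A, K = {x : V | F K x = 0}) {P : Set V}
    (hP : P ∈ Regions A) :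
    ∃ q : V, (∀ K ∈ A, F K q ≠ 0) ∧ P = closure (cellpt A F q) := by
  obtain ⟨q, hq, hPeq⟩ := hP
  exact ⟨q, (mem_arrComplement_iff hFk q).mp hq, by rw [hPeq, comp_eq_cell hFk hq]⟩

lemma region_of_pt (hFk : ∀ K ∈ A, K = {x : V | F K x = 0}) {q : V}
    (hq : ∀ K ∈ A, F K q ≠ 0) :
    closure (cellpt A F q) ∈ Regions A := by
  have hq' : q ∈ arrComplement A := (mem_arrComplement_iff hFk q).mpr hq
  exact ⟨q, hq', by rw [comp_eq_cell hFk hq']⟩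

lemma sep_iff (hAfin : A.Finite) (hFk : ∀ K ∈ A, K = {x : V | F K x = 0})
    (hFne : ∀ K ∈ A, F K ≠ 0) {b : V} (hFb : ∀ K ∈ A, 0 < F K b)
    {q : V} (hq : ∀ K ∈ A, F K q ≠ 0) {K : Set V} (hK : K ∈ A) :
    K ∈ Sep A (closure (cellpt A F b)) (closure (cellpt A F q)) ↔ F K q < 0 := by
  have hb : ∀ K ∈ A, F K b ≠ 0 := fun K hK => ne_of_gt (hFb K hK)
  have hintq : interior (closure (cellpt A F q)) = cellpt A F q :=
    interior_closure_cell hAfin hFne hq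
  have hintb : interior (closure (cellpt A F b)) = cellpt A F b :=
    interior_closure_cell hAfin hFne hb
  constructor
  · rintro ⟨hKA, g, hgK, hneg, hpos⟩
    have hgb : 0 < g b := by
      apply hpos
      rw [hintb]
      exact self_mem_cell hb
    obtain ⟨c, hc⟩ := exists_smul_of_ker_subset (hFne K hK)
      (fun x hx => by
        have hxK : x ∈ K := by rw [hFk K hK]; exact hx
        rw [hgK] at hxK
        exact hxK)
    have hgb' : g b = c * F K b := by rw [hc]; simp
    have hcpos : 0 < c := by
      have := hFb K hK
      nlinarith
    have hgq : g q < 0 := by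
      apply hneg
      rw [hintq]
      exact self_mem_cell hq
    have hgq' : g q = c * F K q := by rw [hc]; simp
    nlinarith
  · intro h
    refine ⟨hK, F K, hFk K hK, ?_, ?_⟩
    · intro y hy
      rw [hintq] at hy
      exact (sign_flip (hy K hK)).mp h
    · intro y hy
      rw [hintb] at hy
      have := hy K hK
      have hKb := hFb K hK
      rcases mul_pos_iff.mp this with ⟨_, h2⟩ | ⟨h1, _⟩
      · exact h2
      · linarith

lemma sep_eq (hAfin : A.Finite) (hFk : ∀ K ∈ A, K = {x : V | F K x = 0})
    (hFne : ∀ K ∈ A, F K ≠ 0) {b : V} (hFb : ∀ K ∈ A, 0 < F K b)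
    {q : V} (hq : ∀ K ∈ A, F K q ≠ 0) :
    Sep A (closure (cellpt A F b)) (closure (cellpt A F q)) = {K | K ∈ A ∧ F K q < 0} := by
  ext K
  constructor
  · intro hmem
    have hKA : K ∈ A := hmem.1
    exact ⟨hKA, (sep_iff hAfin hFk hFne hFb hq hKA).mp hmem⟩
  · rintro ⟨hKA, hKq⟩
    exact (sep_iff hAfin hFk hFne hFb hq hKA).mpr hKq

end Cells

section Shards

open ShardPaper

variable (A : Set (Set V)) (F : Set V → (V →ₗ[ℝ] ℝ)) (B : Set V) (H : Set V)

/-- The cell of a point inside the hyperplane `H`, with respect to the cutting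
hyperplanes of `H`. -/
def Hcellpt (x : V) : Set V :=
  {y | F H y = 0 ∧ ∀ c, Cuts A B c H → 0 < F c x * F c y}

variable {A F B H}

lemma cuts_spec {c : Set V} (hc : Cuts A B c H) : c ∈ A ∧ c ≠ H ∧
    ¬ IsBasic (pairSub A c H) B H := ⟨hc.1, hc.2.2.1, hc.2.2.2.2⟩

lemma cutset_finite (hAfin : A.Finite) : {c : Set V | Cuts A B c H}.Finite :=
  hAfin.subset (fun c hc => hc.1)

lemma uncut_mem_iff (hFk : ∀ K ∈ A, K = {x : V | F K x = 0}) (hH : H ∈ A) (y : V) :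
    y ∈ uncut A B H ↔ (F H y = 0 ∧ ∀ c, Cuts A B c H → F c y ≠ 0) := by
  constructor
  · rintro ⟨hyH, hyc⟩
    constructor
    · rw [hFk H hH] at hyH; exact hyH
    · intro c hc hcy
      exact hyc (Set.mem_sUnion.mpr ⟨c, hc, by rw [hFk c hc.1]; exact hcy⟩)
  · rintro ⟨hyH, hyc⟩
    constructor
    · rw [hFk H hH]; exact hyH
    · intro hmem
      obtain ⟨c, hc, hyc'⟩ := Set.mem_sUnion.mp hmem
      rw [hFk c hc.1] at hyc'
      exact hyc c hc hyc'

lemma Hcell_convex (x : V) : Convex ℝ (Hcellpt A F B H x) := by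
  intro y hy z hz a b ha hb hab
  constructor
  · have h1 := hy.1
    have h2 := hz.1
    simp only [map_add, map_smul, smul_eq_mul, h1, h2]
    ring
  · intro c hc
    have h1 := hy.2 c hc
    have h2 := hz.2 c hc
    have heq : F c x * F c (a • y + b • z) = a * (F c x * F c y) + b * (F c x * F c z) := by
      simp [map_add, map_smul]
      ring
    rw [heq]
    exact combo_pos ha hb hab h1 h2

lemma Hcell_subset_uncut (hFk : ∀ K ∈ A, K = {x : V | F K x = 0}) (hH : H ∈ A) (x : V) :
    Hcellpt A F B H x ⊆ uncut A B H := by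
  intro y hy
  rw [uncut_mem_iff hFk hH]
  refine ⟨hy.1, fun c hc hc0 => ?_⟩
  have := hy.2 c hc
  rw [hc0, mul_zero] at this
  exact lt_irrefl 0 this

lemma self_mem_Hcell (hFk : ∀ K ∈ A, K = {x : V | F K x = 0}) (hH : H ∈ A) {x : V}
    (hx : x ∈ uncut A B H) : x ∈ Hcellpt A F B H x := by
  rw [uncut_mem_iff hFk hH] at hx
  refine ⟨hx.1, fun c hc => ?_⟩
  rcases (hx.2 c hc).lt_or_gt with h | h
  · exact mul_pos_of_neg_of_neg h h
  · exact mul_pos h h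

lemma Hcomp_eq_Hcell (hFk : ∀ K ∈ A, K = {x : V | F K x = 0}) (hH : H ∈ A) {x : V}
    (hx : x ∈ uncut A B H) :
    connectedComponentIn (uncut A B H) x = Hcellpt A F B H x := by
  apply Set.Subset.antisymm
  · intro y hy
    have ht : IsPreconnected (connectedComponentIn (uncut A B H) x) :=
      isPreconnected_connectedComponentIn
    have hsub : connectedComponentIn (uncut A B H) x ⊆ uncut A B H :=
      connectedComponentIn_subset _ _
    have hxmem : x ∈ connectedComponentIn (uncut A B H) x := mem_connectedComponentIn hx
    constructor
    · have := hsub hy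
      rw [uncut_mem_iff hFk hH] at this
      exact this.1
    · intro c hc
      have hcover : connectedComponentIn (uncut A B H) x ⊆
          {v : V | 0 < F c v} ∪ {v : V | F c v < 0} := by
        intro v hv
        have := hsub hv
        rw [uncut_mem_iff hFk hH] at this
        rcases (this.2 c hc).lt_or_gt with h | h
        · exact Or.inr h
        · exact Or.inl h
      have hdisj : Disjoint {v : V | 0 < F c v} {v : V | F c v < 0} := by
        rw [Set.disjoint_left]
        intro a ha ha'
        simp only [Set.mem_setOf_eq] at ha ha'
        linarith
      have hopen1 : IsOpen {v : V | 0 < F c v} :=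
        isOpen_lt continuous_const (F c).continuous_of_finiteDimensional
      have hopen2 : IsOpen {v : V | F c v < 0} :=
        isOpen_lt (F c).continuous_of_finiteDimensional continuous_const
      rcases ht.subset_or_subset hopen1 hopen2 hdisj hcover with h | h
      · exact mul_pos (h hxmem) (h hy)
      · exact mul_pos_of_neg_of_neg (h hxmem) (h hy)
  · exact (Hcell_convex x).isPreconnected.subset_connectedComponentIn
      (self_mem_Hcell hFk hH hx) (Hcell_subset_uncut hFk hH x)

lemma Hcell_ball (hAfin : A.Finite) (hFk : ∀ K ∈ A, K = {x : V | F K x = 0}) (hH : H ∈ A)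
    {x : V} (hx : x ∈ uncut A B H) :
    ∃ ε > 0, ∀ y, F H y = 0 → ‖y - x‖ < ε → y ∈ Hcellpt A F B H x := by
  rw [uncut_mem_iff hFk hH] at hx
  set O : Set V := ⋂ c ∈ {c : Set V | Cuts A B c H}, {y : V | 0 < F c x * F c y} with hOdef
  have hOopen : IsOpen O :=
    (cutset_finite hAfin).isOpen_biInter (fun c _ =>
      isOpen_lt continuous_const (continuous_const.mul (F c).continuous_of_finiteDimensional))
  have hxO : x ∈ O := by
    rw [hOdef]
    simp only [Set.mem_iInter, Set.mem_setOf_eq]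
    intro c hc
    rcases (hx.2 c hc).lt_or_gt with h | h
    · exact mul_pos_of_neg_of_neg h h
    · exact mul_pos h h
  obtain ⟨ε, hε, hball⟩ := Metric.isOpen_iff.mp hOopen x hxO
  refine ⟨ε, hε, fun y hyH hyx => ?_⟩
  have hyO : y ∈ O := hball (by rw [Metric.mem_ball, dist_eq_norm]; exact hyx)
  rw [hOdef] at hyO
  simp only [Set.mem_iInter, Set.mem_setOf_eq] at hyO
  exact ⟨hyH, fun c hc => hyO c hc⟩

lemma closure_Hcell_sign {x : V} {c : Set V} (hc : Cuts A B c H) {y : V}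
    (hy : y ∈ closure (Hcellpt A F B H x)) : 0 ≤ F c x * F c y := by
  have hsub : Hcellpt A F B H x ⊆ {v : V | 0 ≤ F c x * F c v} :=
    fun v hv => le_of_lt (hv.2 c hc)
  have hcl : IsClosed {v : V | 0 ≤ F c x * F c v} :=
    isClosed_le continuous_const (continuous_const.mul (F c).continuous_of_finiteDimensional)
  exact closure_minimal hsub hcl hy

lemma shard_subset_H (hFk : ∀ K ∈ A, K = {x : V | F K x = 0}) {Sg : Set V}
    (hSh : IsShardIn A B H Sg) : Sg ⊆ {x : V | F H x = 0} := by
  obtain ⟨hH, x₀, hx₀, hSgEq⟩ := hSh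
  have hcl : IsClosed {x : V | F H x = 0} :=
    isClosed_eq (F H).continuous_of_finiteDimensional continuous_const
  rw [hSgEq]
  apply closure_minimal _ hcl
  intro y hy
  have := connectedComponentIn_subset (uncut A B H) x₀ hy
  rw [uncut_mem_iff hFk hH] at this
  exact this.1

lemma shard_eq (hFk : ∀ K ∈ A, K = {x : V | F K x = 0}) {Sg : Set V}
    (hSh : IsShardIn A B H Sg) :
    ∃ x₀, x₀ ∈ uncut A B H ∧ Sg = closure (Hcellpt A F B H x₀) := by
  obtain ⟨hH, x₀, hx₀, hSgEq⟩ := hSh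
  exact ⟨x₀, hx₀, by rw [hSgEq, Hcomp_eq_Hcell hFk hH hx₀]⟩

lemma span_shard (hAfin : A.Finite) (hFk : ∀ K ∈ A, K = {x : V | F K x = 0}) (hH : H ∈ A)
    {Sg : Set V} (hSh : IsShardIn A B H Sg) :
    Submodule.span ℝ Sg = LinearMap.ker (F H) := by
  obtain ⟨x₀, hx₀, hSgEq⟩ := shard_eq hFk hSh
  obtain ⟨ε, hε, hball⟩ := Hcell_ball hAfin hFk hH hx₀
  have hx₀H : F H x₀ = 0 := ((uncut_mem_iff hFk hH x₀).mp hx₀).1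
  apply span_eq_ker_of_ball hε hx₀H
  · intro y hyH hyx
    rw [hSgEq]
    exact subset_closure (hball y hyH hyx)
  · intro y hy
    exact shard_subset_H hFk ⟨hH, x₀, hx₀, by rw [hSgEq, Hcomp_eq_Hcell hFk hH hx₀]⟩ hy

end Shards

section Wall

open ShardPaper

variable {A : Set (Set V)} {F : Set V → (V →ₗ[ℝ] ℝ)}

/-- Walking from a generic interior point of a region towards the base region, the
first wall crossed: the crossing point lies on exactly one hyperplane, and just past
it all other signs are preserved. -/
lemma exists_wall (hAfin : A.Finite) {b q : V} (hFb : ∀ K ∈ A, 0 < F K b)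
    (hq : ∀ K ∈ A, F K q ≠ 0)
    (hgen : ∀ K ∈ A, ∀ K' ∈ A, K ≠ K' → F K q * F K' b ≠ F K' q * F K b)
    {H₀ : Set V} (hH₀ : H₀ ∈ A) (hH₀q : F H₀ q < 0) :
    ∃ W ∈ A, F W q < 0 ∧ ∃ x₁ x₂ : V,
      (F W x₁ = 0 ∧ ∀ K ∈ A, K ≠ W → 0 < F K q * F K x₁) ∧
      (0 < F W x₂ ∧ ∀ K ∈ A, K ≠ W → 0 < F K q * F K x₂) := by
  classical
  set Sneg : Set (Set V) := {K | K ∈ A ∧ F K q < 0} with hSnegdef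
  have hSnegsub : Sneg ⊆ A := fun K hK => hK.1
  have hSnegfin : Sneg.Finite := hAfin.subset hSnegsub
  set SF : Finset (Set V) := hSnegfin.toFinset with hSFdef
  have hSFmem : ∀ K, K ∈ SF ↔ (K ∈ A ∧ F K q < 0) := by
    intro K
    rw [hSFdef, Set.Finite.mem_toFinset]
    rfl
  have hSFne : SF.Nonempty := ⟨H₀, (hSFmem H₀).mpr ⟨hH₀, hH₀q⟩⟩
  set tf : Set V → ℝ := fun K => F K q / (F K q - F K b) with htfdef
  set xp : ℝ → V := fun t => q + t • (b - q) with hxpdef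
  have hval : ∀ (K : Set V) (t : ℝ), F K (xp t) = F K q + t * (F K b - F K q) := by
    intro K t
    show F K (q + t • (b - q)) = _
    rw [map_add, map_smul, map_sub, smul_eq_mul]
  have hdenom : ∀ K ∈ SF, F K q - F K b < 0 := by
    intro K hK
    rw [hSFmem] at hK
    have := hFb K hK.1
    have := hK.2
    linarith
  have htmul : ∀ K ∈ SF, tf K * (F K q - F K b) = F K q := by
    intro K hK
    rw [htfdef]
    exact div_mul_cancel₀ _ (ne_of_lt (hdenom K hK))
  have htpos : ∀ K ∈ SF, 0 < tf K := by
    intro K hK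
    have h1 := htmul K hK
    have h2 := hdenom K hK
    have h3 := ((hSFmem K).mp hK).2
    nlinarith [le_of_lt h2]
  have htlt1 : ∀ K ∈ SF, tf K < 1 := by
    intro K hK
    have h1 := htmul K hK
    have h2 := hdenom K hK
    have h3 := hFb K ((hSFmem K).mp hK).1
    nlinarith
  have hform : ∀ K ∈ SF, ∀ t : ℝ, F K (xp t) = (F K b - F K q) * (t - tf K) := by
    intro K hK t
    have h1 := htmul K hK
    rw [hval]
    nlinarith [h1]
  obtain ⟨W, hWSF, hWmin⟩ := SF.exists_min_image tf hSFne
  have hWA : W ∈ A := ((hSFmem W).mp hWSF).1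
  have hWq : F W q < 0 := ((hSFmem W).mp hWSF).2
  have htW0 : 0 < tf W := htpos W hWSF
  have htW1 : tf W < 1 := htlt1 W hWSF
  have hstrict : ∀ K ∈ SF, K ≠ W → tf W < tf K := by
    intro K hK hKW
    rcases lt_or_eq_of_le (hWmin K hK) with h | h
    · exact h
    · exfalso
      have hKA : K ∈ A := ((hSFmem K).mp hK).1
      have hKq : F K q < 0 := ((hSFmem K).mp hK).2
      have h1 := htmul K hK
      have h2 := htmul W hWSF
      rw [h] at h2
      have hd1 := hdenom K hK
      have hd2 := hdenom W hWSF
      -- from h1, h2: tf K * (aK - bK) = aK, tf K * (aW - bW) = aW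
      -- so aK * (aW - bW) = tf K * (aK-bK) * (aW-bW) = aW * (aK - bK)
      -- hence aK * bW = aW * bK
      apply hgen K hKA W hWA hKW
      have e1 : F K q * (F W q - F W b) = tf K * (F K q - F K b) * (F W q - F W b) := by
        rw [h1]
      have e2 : F W q * (F K q - F K b) = tf K * (F W q - F W b) * (F K q - F K b) := by
        rw [h2]
      nlinarith [e1, e2]
  -- signs at the crossing point x₁
  have hsign1 : ∀ K ∈ A, K ≠ W → 0 < F K q * F K (xp (tf W)) := by
    intro K hKA hKW
    by_cases hKneg : F K q < 0
    · have hKSF : K ∈ SF := (hSFmem K).mpr ⟨hKA, hKneg⟩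
      have hlt := hstrict K hKSF hKW
      have hf := hform K hKSF (tf W)
      have hd := hdenom K hKSF
      have : F K (xp (tf W)) < 0 := by nlinarith
      exact mul_pos_of_neg_of_neg hKneg this
    · push_neg at hKneg
      have hKpos : 0 < F K q := lt_of_le_of_ne hKneg (Ne.symm (hq K hKA))
      have : F K (xp (tf W)) = (1 - tf W) * F K q + tf W * F K b := by
        rw [hval]; ring
      have hpos : 0 < F K (xp (tf W)) := by
        rw [this]
        exact combo_pos (by linarith) (le_of_lt htW0) (by ring) hKpos (hFb K hKA)
      exact mul_pos hKpos hpos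
  have hW0 : F W (xp (tf W)) = 0 := by
    rw [hform W hWSF]
    ring
  -- choose t₂ strictly between tf W and the next crossing (and 1)
  have hexist_m : ∃ m : ℝ, tf W < m ∧ m ≤ 1 ∧ ∀ K ∈ SF, K ≠ W → m ≤ tf K := by
    by_cases hne : (SF.erase W).Nonempty
    · obtain ⟨K₁, hK₁, hmin₁⟩ := (SF.erase W).exists_min_image tf hne
      have hK₁SF : K₁ ∈ SF := Finset.mem_of_mem_erase hK₁
      have hK₁W : K₁ ≠ W := Finset.ne_of_mem_erase hK₁
      refine ⟨min (tf K₁) 1, ?_, min_le_right _ _, ?_⟩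
      · exact lt_min (hstrict K₁ hK₁SF hK₁W) htW1
      · intro K hK hKW
        exact le_trans (min_le_left _ _) (hmin₁ K (Finset.mem_erase.mpr ⟨hKW, hK⟩))
    · refine ⟨1, htW1, le_refl 1, ?_⟩
      intro K hK hKW
      exact absurd (Finset.mem_erase.mpr ⟨hKW, hK⟩) (fun h => hne ⟨K, h⟩)
  obtain ⟨m, hm1, hm2, hm3⟩ := hexist_m
  set t₂ : ℝ := (tf W + m) / 2 with ht₂def
  have ht₂a : tf W < t₂ := by rw [ht₂def]; linarith
  have ht₂b : t₂ < m := by rw [ht₂def]; linarith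
  have ht₂pos : 0 < t₂ := lt_trans htW0 ht₂a
  have ht₂lt1 : t₂ < 1 := lt_of_lt_of_le ht₂b hm2
  have hsign2 : ∀ K ∈ A, K ≠ W → 0 < F K q * F K (xp t₂) := by
    intro K hKA hKW
    by_cases hKneg : F K q < 0
    · have hKSF : K ∈ SF := (hSFmem K).mpr ⟨hKA, hKneg⟩
      have hlt : t₂ < tf K := lt_of_lt_of_le ht₂b (hm3 K hKSF hKW)
      have hf := hform K hKSF t₂
      have hd := hdenom K hKSF
      have : F K (xp t₂) < 0 := by nlinarith
      exact mul_pos_of_neg_of_neg hKneg this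
    · push_neg at hKneg
      have hKpos : 0 < F K q := lt_of_le_of_ne hKneg (Ne.symm (hq K hKA))
      have heq : F K (xp t₂) = (1 - t₂) * F K q + t₂ * F K b := by
        rw [hval]; ring
      have hpos : 0 < F K (xp t₂) := by
        rw [heq]
        exact combo_pos (by linarith) (le_of_lt ht₂pos) (by ring) hKpos (hFb K hKA)
      exact mul_pos hKpos hpos
  have hWt₂ : 0 < F W (xp t₂) := by
    have hf := hform W hWSF t₂
    have hd := hdenom W hWSF
    nlinarith
  exact ⟨W, hWA, hWq, xp (tf W), xp t₂, ⟨hW0, hsign1⟩, ⟨hWt₂, hsign2⟩⟩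

/-- Fat ball at the crossing point: a relative neighborhood of `x₁` inside the wall
`W` is contained in the closure of the cell of `q`, with all other signs preserved. -/
lemma crossing_ball (hAfin : A.Finite) {q : V} (hq : ∀ K ∈ A, F K q ≠ 0)
    {W : Set V} {x₁ : V} (hx₁W : F W x₁ = 0)
    (hstr : ∀ K ∈ A, K ≠ W → 0 < F K q * F K x₁) :
    ∃ ε > 0, ∀ y, F W y = 0 → ‖y - x₁‖ < ε →
      (y ∈ closure (cellpt A F q) ∧ ∀ K ∈ A, K ≠ W → 0 < F K q * F K y) := by
  classical
  set O : Set V := ⋂ K ∈ {K | K ∈ A ∧ K ≠ W}, {y : V | 0 < F K q * F K y} with hOdef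
  have hOopen : IsOpen O := by
    apply Set.Finite.isOpen_biInter (hAfin.subset (fun K hK => hK.1))
    intro K _
    exact isOpen_lt continuous_const (continuous_const.mul (F K).continuous_of_finiteDimensional)
  have hx₁O : x₁ ∈ O := by
    rw [hOdef]
    simp only [Set.mem_iInter, Set.mem_setOf_eq]
    exact fun K hK => hstr K hK.1 hK.2
  obtain ⟨ε, hε, hball⟩ := Metric.isOpen_iff.mp hOopen x₁ hx₁O
  refine ⟨ε, hε, fun y hyW hyx => ?_⟩
  have hyO : y ∈ O := hball (by rw [Metric.mem_ball, dist_eq_norm]; exact hyx)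
  rw [hOdef] at hyO
  simp only [Set.mem_iInter, Set.mem_setOf_eq] at hyO
  have hysign : ∀ K ∈ A, K ≠ W → 0 < F K q * F K y := fun K hK hKW => hyO K ⟨hK, hKW⟩
  refine ⟨?_, hysign⟩
  -- approach y from the interior of the cell
  have hmem : ∀ s : ℝ, s ∈ Set.Ioo (0:ℝ) 1 → y + s • (q - y) ∈ cellpt A F q := by
    intro s hs
    intro K hK
    have hval : F K (y + s • (q - y)) = F K y + s * (F K q - F K y) := by
      rw [map_add, map_smul, map_sub, smul_eq_mul]
    rw [hval]
    by_cases hKW : K = W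
    · subst hKW
      rw [hyW]
      have : F K q * (0 + s * (F K q - 0)) = s * (F K q * F K q) := by ring
      rw [this]
      exact mul_pos hs.1 (mul_self_pos.mpr (hq K hK))
    · have h1 := hysign K hK hKW
      have heq : F K q * (F K y + s * (F K q - F K y)) =
          (1 - s) * (F K q * F K y) + s * (F K q * F K q) := by ring
      rw [heq]
      have h2 : 0 < F K q * F K q := mul_self_pos.mpr (hq K hK)
      nlinarith [hs.1, hs.2]
  have htend : Filter.Tendsto (fun s : ℝ => y + s • (q - y)) (nhdsWithin 0 (Set.Ioo 0 1))
      (nhds y) := by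
    have hcont : Continuous (fun s : ℝ => y + s • (q - y)) := by
      continuity
    have := hcont.tendsto 0
    simp only [zero_smul, add_zero] at this
    exact this.mono_left nhdsWithin_le_nhds
  have hNeBot : (nhdsWithin (0:ℝ) (Set.Ioo 0 1)).NeBot := by
    apply mem_closure_iff_nhdsWithin_neBot.mp
    rw [closure_Ioo (by norm_num : (0:ℝ) ≠ 1)]
    exact ⟨le_refl 0, by norm_num⟩
  apply mem_closure_of_tendsto htend
  filter_upwards [self_mem_nhdsWithin] with s hs
  exact hmem s hs

end Wall

section Basic

open ShardPaper

variable {A' : Set (Set V)} {F : Set V → (V →ₗ[ℝ] ℝ)}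

/-- If at a point `x₁` of `H` all other hyperplanes of the arrangement have strictly
positive (base-region) sign, then `H` is basic. -/
lemma isBasic_of_pos (hA'fin : A'.Finite) (hFk' : ∀ K ∈ A', K = {x : V | F K x = 0})
    (hFne' : ∀ K ∈ A', F K ≠ 0) {b : V} (hFb' : ∀ K ∈ A', 0 < F K b)
    {H : Set V} (hH : H ∈ A') {x₁ : V} (hx₁ : F H x₁ = 0)
    (hpos : ∀ K ∈ A', K ≠ H → 0 < F K x₁)
    {B₀ : Set V} (hB₀ : B₀ ⊆ closure (cellpt A' F b)) : IsBasic A' B₀ H := by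
  classical
  have hb' : ∀ K ∈ A', F K b ≠ 0 := fun K hK => ne_of_gt (hFb' K hK)
  set R' : Set V := closure (cellpt A' F b) with hR'def
  -- relative ball around x₁ with positive signs
  set O : Set V := ⋂ K ∈ {K | K ∈ A' ∧ K ≠ H}, {y : V | 0 < F K y} with hOdef
  have hOopen : IsOpen O := by
    apply Set.Finite.isOpen_biInter (hA'fin.subset (fun K hK => hK.1))
    intro K _
    exact isOpen_lt continuous_const (F K).continuous_of_finiteDimensional
  have hx₁O : x₁ ∈ O := by
    rw [hOdef]
    simp only [Set.mem_iInter, Set.mem_setOf_eq]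
    exact fun K hK => hpos K hK.1 hK.2
  obtain ⟨ε, hε, hball⟩ := Metric.isOpen_iff.mp hOopen x₁ hx₁O
  have hblk : ∀ y : V, F H y = 0 → ‖y - x₁‖ < ε → y ∈ R' ∩ {x : V | F H x = 0} := by
    intro y hyH hyx
    have hyO : y ∈ O := hball (by rw [Metric.mem_ball, dist_eq_norm]; exact hyx)
    rw [hOdef] at hyO
    simp only [Set.mem_iInter, Set.mem_setOf_eq] at hyO
    refine ⟨?_, hyH⟩
    have hmem : ∀ s : ℝ, s ∈ Set.Ioo (0:ℝ) 1 → y + s • b ∈ cellpt A' F b := by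
      intro s hs K hK
      have hval : F K (y + s • b) = F K y + s * F K b := by
        rw [map_add, map_smul, smul_eq_mul]
      rw [hval]
      by_cases hKH : K = H
      · subst hKH
        rw [hyH, zero_add]
        exact mul_pos (hFb' K hK) (mul_pos hs.1 (hFb' K hK))
      · have h1 : 0 < F K y := hyO K ⟨hK, hKH⟩
        have h2 := hFb' K hK
        have h3 : 0 < F K y + s * F K b := by nlinarith [hs.1]
        exact mul_pos h2 h3
    have htend : Filter.Tendsto (fun s : ℝ => y + s • b) (nhdsWithin 0 (Set.Ioo 0 1))
        (nhds y) := by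
      have hcont : Continuous (fun s : ℝ => y + s • b) :=
        continuous_const.add (continuous_id.smul continuous_const)
      have := hcont.tendsto 0
      simp only [zero_smul, add_zero] at this
      exact this.mono_left nhdsWithin_le_nhds
    have hNeBot : (nhdsWithin (0:ℝ) (Set.Ioo 0 1)).NeBot := by
      apply mem_closure_iff_nhdsWithin_neBot.mp
      rw [closure_Ioo (by norm_num : (0:ℝ) ≠ 1)]
      exact ⟨le_refl 0, by norm_num⟩
    apply mem_closure_of_tendsto htend
    filter_upwards [self_mem_nhdsWithin] with s hs
    exact hmem s hs
  have hspan : Submodule.span ℝ (R' ∩ {x : V | F H x = 0}) = LinearMap.ker (F H) := by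
    apply span_eq_ker_of_ball hε hx₁ hblk
    intro y hy
    exact hy.2
  refine ⟨R', region_of_pt hFk' hb', hB₀, hH, ?_⟩
  have hHset : R' ∩ H = R' ∩ {x : V | F H x = 0} := by rw [← hFk' H hH]
  rw [setDim, hHset, hspan]
  exact finrank_ker_add_one (hFne' H hH)

/-- A finite subset with the same span. -/
lemma exists_finset_span (G : Set V) :
    ∃ T : Finset V, ↑T ⊆ G ∧ Submodule.span ℝ (T : Set V) = Submodule.span ℝ G := by
  classical
  obtain ⟨S, hS⟩ : (Submodule.span ℝ G).FG := IsNoetherian.noetherian _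
  have h1 : ∀ v ∈ S, ∃ t : Finset V, ↑t ⊆ G ∧ v ∈ Submodule.span ℝ (t : Set V) := by
    intro v hv
    have hvmem : v ∈ Submodule.span ℝ G := by
      rw [← hS]
      exact Submodule.subset_span hv
    exact Submodule.mem_span_finite_of_mem_span hvmem
  choose! t ht1 ht2 using h1
  refine ⟨S.biUnion t, ?_, ?_⟩
  · intro v hv
    simp only [Finset.coe_biUnion, Set.mem_iUnion] at hv
    obtain ⟨w, hw, hvw⟩ := hv
    exact ht1 w hw hvw
  · apply le_antisymm
    · apply Submodule.span_mono
      intro v hv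
      simp only [Finset.coe_biUnion, Set.mem_iUnion] at hv
      obtain ⟨w, hw, hvw⟩ := hv
      exact ht1 w hw hvw
    · rw [← hS]
      apply Submodule.span_le.mpr
      intro v hv
      have := ht2 v hv
      apply Submodule.span_mono _ this
      intro u hu
      simp only [Finset.coe_biUnion, Set.mem_iUnion]
      exact ⟨v, hv, hu⟩

/-- The centroid of a nonempty finite set in a convex set. -/
lemma centroid_mem {G : Set V} (hG : Convex ℝ G) {T : Finset V} (hne : T.Nonempty)
    (hsub : ↑T ⊆ G) : (∑ v ∈ T, ((T.card : ℝ))⁻¹ • v) ∈ G := by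
  have hcard : (0:ℝ) < (T.card : ℝ) := by
    have := Finset.card_pos.mpr hne
    exact_mod_cast this
  apply hG.sum_mem
  · intro i _
    positivity
  · rw [Finset.sum_const, nsmul_eq_mul]
    field_simp
  · exact fun i hi => hsub hi

lemma centroid_sign {T : Finset V} (hne : T.Nonempty) {g : V →ₗ[ℝ] ℝ} {a : ℝ}
    (hnn : ∀ v ∈ T, 0 ≤ a * g v) (hex : ∃ v ∈ T, a * g v ≠ 0) :
    0 < a * g (∑ v ∈ T, ((T.card : ℝ))⁻¹ • v) := by
  have hcard : (0:ℝ) < (T.card : ℝ) := by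
    have := Finset.card_pos.mpr hne
    exact_mod_cast this
  have hval : a * g (∑ v ∈ T, ((T.card : ℝ))⁻¹ • v) =
      ∑ v ∈ T, ((T.card : ℝ))⁻¹ * (a * g v) := by
    rw [map_sum, Finset.mul_sum]
    congr 1
    ext v
    rw [map_smul, smul_eq_mul]
    ring
  rw [hval]
  apply Finset.sum_pos'
  · intro v hv
    have := hnn v hv
    positivity
  · obtain ⟨v, hv, hv0⟩ := hex
    refine ⟨v, hv, ?_⟩
    have h1 : 0 < a * g v := lt_of_le_of_ne (hnn v hv) (Ne.symm hv0)
    positivity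

end Basic

end ShardLemmas


/-- Lemma (J Sig char).  If `Σ` is a lower shard of `R`, then `J(Σ)` is
the unique minimal element of the poset of regions among regions `Q ≤ R` with
`H(Σ) ∈ S(Q)`. -/
theorem statement_1 {V : Type*} [NormedAddCommGroup V] [InnerProductSpace ℝ V]
    [FiniteDimensional ℝ V]
    (A : Set (Set V)) (B : Set V)
    (hA : IsCentralArrangement A) (hsimp : Simplicial A) (hB : B ∈ Regions A)
    (Sg R H J : Set V)
    (hlow : IsLowerShard A B Sg R)
    (hH : IsShardIn A B H Sg)
    (hJ : IsJ A B Sg J) :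
    regLE A B J R ∧ H ∈ Sep A B J ∧
      ∀ Q, regLE A B Q R → H ∈ Sep A B Q → regLE A B J Q := by
  classical
  obtain ⟨hAfin, hAhyp⟩ := hA
  obtain ⟨b, hbmem, hBeq⟩ := hB
  -- choose functionals oriented positively on the interior of the base region
  have hbnotin : ∀ K ∈ A, ∀ f : V →ₗ[ℝ] ℝ, K = {x : V | f x = 0} → f b ≠ 0 := by
    intro K hK f hfK h0
    exact hbmem (Set.mem_sUnion.mpr ⟨K, hK, by rw [hfK]; exact h0⟩)
  have hchoice : ∀ K : Set V, ∃ f : V →ₗ[ℝ] ℝ,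
      K ∈ A → (f ≠ 0 ∧ K = {x : V | f x = 0} ∧ 0 < f b) := by
    intro K
    by_cases hK : K ∈ A
    · obtain ⟨f, hf0, hfK⟩ := hAhyp K hK
      rcases (hbnotin K hK f hfK).lt_or_gt with h | h
      · refine ⟨-f, fun _ => ⟨neg_ne_zero.mpr hf0, ?_, by simpa using h⟩⟩
        rw [hfK]
        ext x
        simp [neg_eq_zero]
      · exact ⟨f, fun _ => ⟨hf0, hfK, h⟩⟩
    · exact ⟨0, fun h => absurd h hK⟩
  choose F hF using hchoice
  have hFne : ∀ K ∈ A, F K ≠ 0 := fun K hK => (hF K hK).1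
  have hFk : ∀ K ∈ A, K = {x : V | F K x = 0} := fun K hK => (hF K hK).2.1
  have hFb : ∀ K ∈ A, 0 < F K b := fun K hK => (hF K hK).2.2
  have hBcell : B = closure (ShardLemmas.cellpt A F b) := by
    rw [hBeq, ShardLemmas.comp_eq_cell hFk hbmem]
  have hRupper := hlow.2
  have hRreg : R ∈ Regions A := hRupper.1
  have hRdim := hRupper.2.1
  have hHA : H ∈ A := hH.1
  have hJupper := hJ.1
  have hJreg : J ∈ Regions A := hJupper.1
  -- shard data
  obtain ⟨x₀, hx₀, hSgEq⟩ := ShardLemmas.shard_eq hFk hH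
  have hx₀un := (ShardLemmas.uncut_mem_iff hFk hHA x₀).mp hx₀
  have hx₀H : F H x₀ = 0 := hx₀un.1
  have hx₀c : ∀ c, Cuts A B c H → F c x₀ ≠ 0 := hx₀un.2
  have hspanSg : Submodule.span ℝ Sg = LinearMap.ker (F H) :=
    ShardLemmas.span_shard hAfin hFk hHA hH
  -- Part 2: H is the hyperplane of the shard, hence `H ∈ Sep A B J`.
  have hpart2 : H ∈ Sep A B J := by
    obtain ⟨H₁, hSh₁, hSep₁⟩ := hJupper.2.2
    have hH₁A : H₁ ∈ A := hSh₁.1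
    suffices hHH₁ : H = H₁ by rw [hHH₁]; exact hSep₁
    have hSgH₁ : Sg ⊆ {x : V | F H₁ x = 0} := ShardLemmas.shard_subset_H hFk hSh₁
    obtain ⟨ε, hε, hball⟩ := ShardLemmas.Hcell_ball hAfin hFk hHA hx₀
    have hsubker : ∀ h : V, F H h = 0 → F H₁ h = 0 := by
      intro h hh
      set δ : ℝ := ε / (2 * (‖h‖ + 1)) with hδdef
      have hδ : 0 < δ := by positivity
      have hmem : x₀ + δ • h ∈ Sg := by
        rw [hSgEq]
        apply subset_closure
        apply hball
        · rw [map_add, map_smul, hx₀H, hh, smul_eq_mul, mul_zero, add_zero]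
        · have hn : ‖x₀ + δ • h - x₀‖ = δ * ‖h‖ := by
            simp [norm_smul, abs_of_pos hδ]
          rw [hn]
          have h1 : δ * ‖h‖ ≤ δ * (‖h‖ + 1) := by nlinarith
          have h2 : δ * (‖h‖ + 1) = ε / 2 := by rw [hδdef]; field_simp
          linarith
      have hmem0 : x₀ ∈ Sg := by
        rw [hSgEq]
        exact subset_closure (ShardLemmas.self_mem_Hcell hFk hHA hx₀)
      have e1 : F H₁ (x₀ + δ • h) = 0 := hSgH₁ hmem
      have e0 : F H₁ x₀ = 0 := hSgH₁ hmem0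
      rw [map_add, map_smul, e0, zero_add, smul_eq_mul] at e1
      rcases mul_eq_zero.mp e1 with h' | h'
      · exact absurd h' (ne_of_gt hδ)
      · exact h'
    have heq := ShardLemmas.hyperplane_eq_of_subset (hFne H hHA) (hFne H₁ hH₁A)
      (fun x hx => hsubker x hx)
    rw [hFk H hHA, hFk H₁ hH₁A]
    exact heq
  refine ⟨hJ.2 R hRupper, hpart2, ?_⟩
  -- Part 3
  intro Q hQR hHQ
  obtain ⟨hQreg, hRreg', hQRsep⟩ := hQR
  obtain ⟨p₁, hp₁, hQcell⟩ := ShardLemmas.region_repr hFk hQreg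
  obtain ⟨r₀, hr₀, hRcell⟩ := ShardLemmas.region_repr hFk hRreg
  have hSepQ : Sep A B Q = {K | K ∈ A ∧ F K p₁ < 0} := by
    rw [hQcell, hBcell]
    exact ShardLemmas.sep_eq hAfin hFk hFne hFb hp₁
  have hHp₁ : F H p₁ < 0 := by
    have hmem := hHQ
    rw [hSepQ] at hmem
    exact hmem.2
  -- choose a good point whose separating set has minimal cardinality
  set N : Set ℕ := {n | ∃ p : V, ((∀ K ∈ A, F K p ≠ 0) ∧ F H p < 0 ∧
      {K | K ∈ A ∧ F K p < 0} ⊆ Sep A B Q) ∧ {K | K ∈ A ∧ F K p < 0}.ncard = n} with hNdef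
  have hNne : N.Nonempty := ⟨_, p₁, ⟨hp₁, hHp₁, by rw [hSepQ]⟩, rfl⟩
  obtain ⟨p₀, hgood₀, hcard₀⟩ := Nat.sInf_mem hNne
  -- perturb to a generic point in the same cell
  set T : Set (V →ₗ[ℝ] ℝ) :=
    (fun P : Set V × Set V => F P.2 b • F P.1 - F P.1 b • F P.2) ''
      {P : Set V × Set V | P.1 ∈ A ∧ P.2 ∈ A ∧ P.1 ≠ P.2} with hTdef
  have hTfin : T.Finite := by
    apply Set.Finite.image
    apply Set.Finite.subset (hAfin.prod hAfin)
    intro P hP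
    exact ⟨hP.1, hP.2.1⟩
  have hT0 : ∀ g ∈ T, g ≠ 0 := by
    rintro g ⟨⟨K, K'⟩, ⟨hK, hK', hne⟩, rfl⟩ h0
    apply hne
    have hval : ∀ x : V, F K' b * F K x - F K b * F K' x = 0 := by
      intro x
      have hx := congrArg (fun (g : V →ₗ[ℝ] ℝ) => g x) h0
      simpa [LinearMap.sub_apply, LinearMap.smul_apply, smul_eq_mul] using hx
    have hker : {x : V | F K x = 0} = {x : V | F K' x = 0} := by
      ext x
      simp only [Set.mem_setOf_eq]
      constructor
      · intro hx
        have hvx := hval x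
        rw [hx, mul_zero, zero_sub, neg_eq_zero] at hvx
        rcases mul_eq_zero.mp hvx with h | h
        · exact absurd h (ne_of_gt (hFb K hK))
        · exact h
      · intro hx
        have hvx := hval x
        rw [hx, mul_zero, sub_zero] at hvx
        rcases mul_eq_zero.mp hvx with h | h
        · exact absurd h (ne_of_gt (hFb K' hK'))
        · exact h
    rw [hFk K hK, hFk K' hK']
    exact hker
  obtain ⟨q, hqU, hqgen⟩ := ShardLemmas.exists_generic
    (ShardLemmas.cell_isOpen hAfin p₀) ⟨p₀, ShardLemmas.self_mem_cell hgood₀.1⟩ hTfin hT0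
  have hq : ∀ K ∈ A, F K q ≠ 0 := by
    intro K hK h0
    have hx := hqU K hK
    rw [h0, mul_zero] at hx
    exact lt_irrefl 0 hx
  have hsignq : ∀ K ∈ A, (F K q < 0 ↔ F K p₀ < 0) :=
    fun K hK => (ShardLemmas.sign_flip (hqU K hK)).symm
  have hSset : {K | K ∈ A ∧ F K q < 0} = {K | K ∈ A ∧ F K p₀ < 0} := by
    ext K
    exact ⟨fun h => ⟨h.1, (hsignq K h.1).mp h.2⟩, fun h => ⟨h.1, (hsignq K h.1).mpr h.2⟩⟩
  have hHq : F H q < 0 := (hsignq H hHA).mpr hgood₀.2.1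
  have hSQq : {K | K ∈ A ∧ F K q < 0} ⊆ Sep A B Q := by
    rw [hSset]
    exact hgood₀.2.2
  have hqgen' : ∀ K ∈ A, ∀ K' ∈ A, K ≠ K' → F K q * F K' b ≠ F K' q * F K b := by
    intro K hK K' hK' hne heq
    apply hqgen (F K' b • F K - F K b • F K') ⟨(K, K'), ⟨hK, hK', hne⟩, rfl⟩
    simp only [LinearMap.sub_apply, LinearMap.smul_apply, smul_eq_mul]
    linarith [heq]
  obtain ⟨W, hWA, hWq, x₁, x₂, ⟨hWx₁, hstr₁⟩, ⟨hWx₂, hstr₂⟩⟩ :=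
    ShardLemmas.exists_wall hAfin hFb hq hqgen' hHA hHq
  -- the first wall crossed must be H, by minimality
  have hWH : W = H := by
    by_contra hWH
    have hx₂c : ∀ K ∈ A, F K x₂ ≠ 0 := by
      intro K hK
      by_cases hKW : K = W
      · subst hKW
        exact ne_of_gt hWx₂
      · intro h0
        have hx := hstr₂ K hK hKW
        rw [h0, mul_zero] at hx
        exact lt_irrefl 0 hx
    have hsetx₂ : {K | K ∈ A ∧ F K x₂ < 0} = {K | K ∈ A ∧ F K q < 0} \ {W} := by
      ext K
      constructor
      · rintro ⟨hK, hneg⟩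
        have hKW : K ≠ W := by
          intro h
          subst h
          linarith
        exact ⟨⟨hK, ShardLemmas.neg_of_mul_pos_neg (hstr₂ K hK hKW) hneg⟩, hKW⟩
      · rintro ⟨⟨hK, hq'⟩, hKW⟩
        have hKW' : K ≠ W := hKW
        exact ⟨hK, (ShardLemmas.sign_flip (hstr₂ K hK hKW')).mp hq'⟩
    have hHW : H ≠ W := fun h => hWH h.symm
    have hmemN : {K | K ∈ A ∧ F K x₂ < 0}.ncard ∈ N := by
      refine ⟨x₂, ⟨hx₂c, ?_, ?_⟩, rfl⟩
      · exact (ShardLemmas.sign_flip (hstr₂ H hHA hHW)).mp hHq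
      · rw [hsetx₂]
        exact fun K hK => hSQq hK.1
    have hle := Nat.sInf_le hmemN
    have hfinq : {K | K ∈ A ∧ F K q < 0}.Finite := hAfin.subset (fun K hK => hK.1)
    have hssub : {K | K ∈ A ∧ F K q < 0} \ {W} ⊂ {K | K ∈ A ∧ F K q < 0} := by
      refine ⟨Set.diff_subset, ?_⟩
      intro hsub
      exact (hsub ⟨hWA, hWq⟩).2 rfl
    have hlt := Set.ncard_lt_ncard hssub hfinq
    rw [hsetx₂] at hle
    have hcardq : {K | K ∈ A ∧ F K q < 0}.ncard = sInf N := by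
      rw [hSset]
      exact hcard₀
    omega
  rw [hWH] at hWx₁ hstr₁
  -- region and shard convexity, span of the contact set
  have hconvR : Convex ℝ R := by
    rw [hRcell]
    exact (ShardLemmas.cell_convex r₀).closure
  have hconvSg : Convex ℝ Sg := by
    rw [hSgEq]
    exact (ShardLemmas.Hcell_convex x₀).closure
  have hSgH : Sg ⊆ {x : V | F H x = 0} := ShardLemmas.shard_subset_H hFk hH
  have hGspan : Submodule.span ℝ (R ∩ Sg) = LinearMap.ker (F H) := by
    have hle : Submodule.span ℝ (R ∩ Sg) ≤ LinearMap.ker (F H) := by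
      rw [Submodule.span_le]
      intro y hy
      exact LinearMap.mem_ker.mpr (hSgH hy.2)
    apply Submodule.eq_of_le_of_finrank_le hle
    have h1 : Module.finrank ℝ (Submodule.span ℝ (R ∩ Sg)) =
        Module.finrank ℝ (Submodule.span ℝ Sg) := hRdim
    rw [hspanSg] at h1
    exact le_of_eq h1.symm
  obtain ⟨Tf, hTfsub, hTfspan⟩ := ShardLemmas.exists_finset_span (R ∩ Sg)
  have hTfspan' : Submodule.span ℝ (Tf : Set V) = LinearMap.ker (F H) := by
    rw [hTfspan, hGspan]
  -- the cutting hyperplanes have the same sign at x₁ as on the shard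
  have hcut : ∀ c, Cuts A B c H → 0 < F c x₀ * F c x₁ := by
    intro c hc
    have hcA : c ∈ A := hc.1
    have hcH : c ≠ H := hc.2.2.1
    obtain ⟨y₀, hy₀H, hy₀c⟩ : ∃ y₀, F H y₀ = 0 ∧ F c y₀ ≠ 0 := by
      by_contra hcc
      push_neg at hcc
      have heq := ShardLemmas.hyperplane_eq_of_subset (hFne H hHA) (hFne c hcA)
        (fun x hx => hcc x hx)
      apply hcH
      rw [hFk c hcA, hFk H hHA]
      exact heq.symm
    have hTne : Tf.Nonempty := by
      rcases Finset.eq_empty_or_nonempty Tf with h | h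
      · exfalso
        rw [h] at hTfspan'
        simp only [Finset.coe_empty, Submodule.span_empty] at hTfspan'
        have hy₀mem : y₀ ∈ LinearMap.ker (F H) := LinearMap.mem_ker.mpr hy₀H
        rw [← hTfspan'] at hy₀mem
        rw [Submodule.mem_bot] at hy₀mem
        apply hy₀c
        rw [hy₀mem, map_zero]
      · exact h
    set z : V := ∑ v ∈ Tf, ((Tf.card : ℝ))⁻¹ • v with hzdef
    have hzG : z ∈ R ∩ Sg := ShardLemmas.centroid_mem (hconvR.inter hconvSg) hTne hTfsub
    have hzH : F H z = 0 := hSgH hzG.2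
    have hzc : 0 < F c x₀ * F c z := by
      apply ShardLemmas.centroid_sign hTne
      · intro v hv
        have hvSg : v ∈ Sg := (hTfsub hv).2
        rw [hSgEq] at hvSg
        exact ShardLemmas.closure_Hcell_sign hc hvSg
      · by_contra hcc
        push_neg at hcc
        have hkerc : ∀ v ∈ Tf, F c v = 0 := by
          intro v hv
          rcases mul_eq_zero.mp (hcc v hv) with h | h
          · exact absurd h (hx₀c c hc)
          · exact h
        have hsub2 : LinearMap.ker (F H) ≤ LinearMap.ker (F c) := by
          rw [← hTfspan', Submodule.span_le]
          intro v hv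
          exact LinearMap.mem_ker.mpr (hkerc v hv)
        exact hy₀c (LinearMap.mem_ker.mp (hsub2 (LinearMap.mem_ker.mpr hy₀H)))
    by_contra hmis
    push_neg at hmis
    have hcx₁ : F c x₁ ≠ 0 := by
      intro h0
      have hx := hstr₁ c hcA hcH
      rw [h0, mul_zero] at hx
      exact lt_irrefl 0 hx
    have hneg : F c x₀ * F c x₁ < 0 :=
      lt_of_le_of_ne hmis (mul_ne_zero (hx₀c c hc) hcx₁)
    have hzx₁ : F c z * F c x₁ < 0 := ShardLemmas.mul_neg_of_pos_of_neg' hzc hneg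
    -- every hyperplane through c ∩ H has positive sign at x₁
    have hKpos : ∀ K ∈ pairSub A c H, K ≠ H → 0 < F K x₁ := by
      intro K hK'' hKH
      have hKA : K ∈ A := hK''.1
      set lam : ℝ := F K y₀ / F c y₀ with hlamdef
      have hlam : ∀ y : V, F H y = 0 → F K y = lam * F c y := by
        intro y hy
        have hu : F c (y - (F c y / F c y₀) • y₀) = 0 := by
          rw [map_sub, map_smul, smul_eq_mul, div_mul_cancel₀ _ hy₀c, sub_self]
        have huH : F H (y - (F c y / F c y₀) • y₀) = 0 := by
          rw [map_sub, map_smul, hy, hy₀H, smul_eq_mul, mul_zero, sub_zero]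
        have humem : (y - (F c y / F c y₀) • y₀) ∈ c ∩ H :=
          ⟨(ShardLemmas.mem_iff_zero hFk hcA).mpr hu, (ShardLemmas.mem_iff_zero hFk hHA).mpr huH⟩
        have huK := (ShardLemmas.mem_iff_zero hFk hKA).mp (hK''.2 humem)
        have huK' : F K y - F c y / F c y₀ * F K y₀ = 0 := by
          simpa [map_sub, map_smul, smul_eq_mul] using huK
        rw [hlamdef]
        field_simp at huK' ⊢
        linear_combination huK'
      have hlamne : lam ≠ 0 := by
        intro h0
        have hsub3 : ∀ y : V, F H y = 0 → F K y = 0 := by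
          intro y hy
          rw [hlam y hy, h0, zero_mul]
        have heq := ShardLemmas.hyperplane_eq_of_subset (hFne H hHA) (hFne K hKA)
          (fun x hx => hsub3 x hx)
        apply hKH
        rw [hFk K hKA, hFk H hHA]
        exact heq.symm
      have h1 : F K x₁ = lam * F c x₁ := hlam x₁ hWx₁
      have h2 : F K z = lam * F c z := hlam z hzH
      have h3 : F K x₁ * F K z < 0 := by
        rw [h1, h2]
        have hl2 : 0 < lam * lam := mul_self_pos.mpr hlamne
        have hcc' : F c x₁ * F c z < 0 := by
          rw [mul_comm]
          exact hzx₁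
        calc lam * F c x₁ * (lam * F c z) = (lam * lam) * (F c x₁ * F c z) := by ring
        _ < 0 := mul_neg_of_pos_of_neg hl2 hcc'
      by_contra hKx₁
      push_neg at hKx₁
      have hKx₁ne : F K x₁ ≠ 0 := by
        intro h0
        rw [h0, zero_mul] at h3
        exact lt_irrefl 0 h3
      have hKx₁neg : F K x₁ < 0 := lt_of_le_of_ne hKx₁ hKx₁ne
      have hKq : F K q < 0 := ShardLemmas.neg_of_mul_pos_neg (hstr₁ K hKA hKH) hKx₁neg
      have hKSR : K ∈ Sep A B R := hQRsep (hSQq ⟨hKA, hKq⟩)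
      have hKr₀ : F K r₀ < 0 := by
        rw [hBcell, hRcell] at hKSR
        exact (ShardLemmas.sep_iff hAfin hFk hFne hFb hr₀ hKA).mp hKSR
      have hKz : 0 < F K z := by
        nlinarith [h3, hKx₁neg]
      have hzR : z ∈ closure (ShardLemmas.cellpt A F r₀) := by
        rw [← hRcell]
        exact hzG.1
      have hsignz := ShardLemmas.mem_region_sign hKA hr₀ hzR (ne_of_gt hKz)
      nlinarith [hsignz, hKr₀, hKz]
    have hA''sub : pairSub A c H ⊆ A := fun K hK => hK.1
    have hbasic : IsBasic (pairSub A c H) B H := by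
      apply ShardLemmas.isBasic_of_pos (hAfin.subset hA''sub)
        (fun K hK => hFk K (hA''sub hK)) (fun K hK => hFne K (hA''sub hK))
        (fun K hK => hFb K (hA''sub hK)) ⟨hHA, Set.inter_subset_right⟩ hWx₁ hKpos ?_
      rw [hBcell]
      apply closure_mono
      intro y hy K hK
      exact hy K (hA''sub hK)
    exact hc.2.2.2.2 hbasic
  -- fat ball at x₁ inside both the region of q and the shard
  obtain ⟨ε₁, hε₁, hball₁⟩ := ShardLemmas.crossing_ball hAfin hq hWx₁ hstr₁
  set O' : Set V := ⋂ c ∈ {c : Set V | Cuts A B c H}, {y : V | 0 < F c x₀ * F c y} with hO'def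
  have hO'open : IsOpen O' := by
    apply Set.Finite.isOpen_biInter (ShardLemmas.cutset_finite hAfin)
    intro c _
    exact isOpen_lt continuous_const (continuous_const.mul (F c).continuous_of_finiteDimensional)
  have hx₁O' : x₁ ∈ O' := by
    rw [hO'def]
    simp only [Set.mem_iInter, Set.mem_setOf_eq]
    exact fun c hc => hcut c hc
  obtain ⟨ε₂, hε₂, hball₂⟩ := Metric.isOpen_iff.mp hO'open x₁ hx₁O'
  set ε₃ : ℝ := min ε₁ ε₂ with hε₃def
  have hε₃ : 0 < ε₃ := lt_min hε₁ hε₂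
  have hfatball : ∀ y : V, F H y = 0 → ‖y - x₁‖ < ε₃ →
      y ∈ closure (ShardLemmas.cellpt A F q) ∩ Sg := by
    intro y hyH hyx
    refine ⟨(hball₁ y hyH (lt_of_lt_of_le hyx (min_le_left _ _))).1, ?_⟩
    have hyO' : y ∈ O' := hball₂ (by
      rw [Metric.mem_ball, dist_eq_norm]
      exact lt_of_lt_of_le hyx (min_le_right _ _))
    rw [hO'def] at hyO'
    simp only [Set.mem_iInter, Set.mem_setOf_eq] at hyO'
    rw [hSgEq]
    exact subset_closure ⟨hyH, fun c hc => hyO' c hc⟩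
  have hspanQ₀ : Submodule.span ℝ (closure (ShardLemmas.cellpt A F q) ∩ Sg) =
      LinearMap.ker (F H) := by
    apply ShardLemmas.span_eq_ker_of_ball hε₃ hWx₁ hfatball
    intro y hy
    exact hSgH hy.2
  have hupper : IsUpperRegion A B Sg (closure (ShardLemmas.cellpt A F q)) := by
    refine ⟨ShardLemmas.region_of_pt hFk hq, ?_, ⟨H, hH, ?_⟩⟩
    · show Module.finrank ℝ (Submodule.span ℝ _) = Module.finrank ℝ (Submodule.span ℝ Sg)
      rw [hspanQ₀, hspanSg]
    · rw [hBcell]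
      exact (ShardLemmas.sep_iff hAfin hFk hFne hFb hq hHA).mpr hHq
  have hJQ₀ := hJ.2 _ hupper
  refine ⟨hJreg, hQreg, ?_⟩
  intro K hK
  have hK' := hJQ₀.2.2 hK
  have hKA : K ∈ A := hK'.1
  have hKq : F K q < 0 := by
    rw [hBcell] at hK'
    exact (ShardLemmas.sep_iff hAfin hFk hFne hFb hq hKA).mp hK'
  exact hSQq ⟨hKA, hKq⟩
end
end
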